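/- arXiv:1805.11430 — 2 statements merged into one kernel-verified Lean document; each statement's English description precedes it below -/
import Mathlib

section
/- For every y ∈ [0,1]: −Σ_{n=1}^N D_n·KI_n(y) = y, where D_n = S_n^{-1}·(Σ_{j∈Ω} (p_j/k_{n,j})·d_{n,j}) and S_n = Σ_{j∈Ω} p_j/k_{n,j}. -/
open Set

noncomputable section

/-- `T_ω = T_{ω_t} ∘ ⋯ ∘ T_{ω_1}` (head of the list applied first). -/
def rwordApply (T : ℕ → ℝ → ℝ) : List ℕ → ℝ → ℝ
  | [], y => y
  | j :: ω, y => rwordApply T ω (T j y)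

/-- the weighted slope product `δ_ω(y,|ω|)`; `ι x` is the index of the
partition interval containing `x`. -/
def rdelta (p : ℕ → ℝ) (k : ℕ → ℕ → ℝ) (ι : ℝ → ℕ) (T : ℕ → ℝ → ℝ) :
    List ℕ → ℝ → ℝ
  | [], _ => 1
  | j :: ω, y => p j / k (ι y) j * rdelta p k ι T ω (T j y)

/-- the random piecewise linear map with slopes `k`, intercepts `d`. -/
def Tpl (k d : ℕ → ℕ → ℝ) (ι : ℝ → ℕ) (j : ℕ) (x : ℝ) : ℝ :=
  k (ι x) j * x + d (ι x) j

/-- finite words with letters in `Ωs`. -/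
def Words (Ωs : Set ℕ) : Type := {ω : List ℕ // ∀ j ∈ ω, j ∈ Ωs}

/-- `KI_n(y) = Σ_{t≥1} Σ_{ω ∈ Ωᵗ} δ_ω(y,t)·1_{I_n}(T_{ω₁^{t-1}}(y))`. -/
def KI (Ωs : Set ℕ) (p : ℕ → ℝ) (k : ℕ → ℕ → ℝ) (ι : ℝ → ℕ) (T : ℕ → ℝ → ℝ)
    (n : ℕ) (y : ℝ) : ℝ :=
  ∑' ω : {ω : List ℕ // (∀ j ∈ ω, j ∈ Ωs) ∧ ω ≠ []},
    if ι (rwordApply T ω.1.dropLast y) = n then rdelta p k ι T ω.1 y else 0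

/-- `KA_i(y) = Σ_{t≥0} Σ_{ω ∈ Ωᵗ} δ_ω(y,t)·1_{I_1 ∪ ⋯ ∪ I_i}(T_ω(y))`. -/
def KA (Ωs : Set ℕ) (p : ℕ → ℝ) (k : ℕ → ℕ → ℝ) (ι : ℝ → ℕ) (T : ℕ → ℝ → ℝ)
    (i : ℕ) (y : ℝ) : ℝ :=
  ∑' ω : Words Ωs,
    if ι (rwordApply T ω.1 y) ≤ i then rdelta p k ι T ω.1 y else 0

/-- `KB_i(y) = Σ_{t≥0} Σ_{ω ∈ Ωᵗ} δ_ω(y,t)·1_{I_{i+1} ∪ ⋯ ∪ I_N}(T_ω(y))`. -/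
def KB (Ωs : Set ℕ) (p : ℕ → ℝ) (k : ℕ → ℕ → ℝ) (ι : ℝ → ℕ) (T : ℕ → ℝ → ℝ)
    (i : ℕ) (y : ℝ) : ℝ :=
  ∑' ω : Words Ωs,
    if i < ι (rwordApply T ω.1 y) then rdelta p k ι T ω.1 y else 0

/-- `S_n = Σ_{j∈Ω} p_j / k_{n,j}`, the average inverse slope on `I_n`. -/
def Sav (Ωs : Set ℕ) (p : ℕ → ℝ) (k : ℕ → ℕ → ℝ) (n : ℕ) : ℝ :=
  ∑' j : Ωs, p j.1 / k n j.1

/-! ### Auxiliary material -/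

lemma rwordApply_concat (T : ℕ → ℝ → ℝ) (ω : List ℕ) (j : ℕ) (y : ℝ) :
    rwordApply T (ω ++ [j]) y = T j (rwordApply T ω y) := by
  induction ω generalizing y with
  | nil => simp [rwordApply]
  | cons a ω ih => simp [rwordApply, ih]

lemma rdelta_concat (p : ℕ → ℝ) (k : ℕ → ℕ → ℝ) (ι : ℝ → ℕ) (T : ℕ → ℝ → ℝ)
    (ω : List ℕ) (j : ℕ) (y : ℝ) :
    rdelta p k ι T (ω ++ [j]) y =
      rdelta p k ι T ω y * (p j / k (ι (rwordApply T ω y)) j) := by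
  induction ω generalizing y with
  | nil => simp [rdelta, rwordApply]
  | cons a ω ih => simp [rdelta, rwordApply, ih]; ring

lemma orbit_mem (k d : ℕ → ℕ → ℝ) (ι : ℝ → ℕ) (Ωs : Set ℕ)
    (hT : ∀ j ∈ Ωs, ∀ x ∈ Icc (0:ℝ) 1, Tpl k d ι j x ∈ Icc (0:ℝ) 1)
    (ω : List ℕ) (hω : ∀ j ∈ ω, j ∈ Ωs) (y : ℝ) (hy : y ∈ Icc (0:ℝ) 1) :
    rwordApply (Tpl k d ι) ω y ∈ Icc (0:ℝ) 1 := by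
  induction ω generalizing y with
  | nil => exact hy
  | cons a ω ih =>
    exact ih (fun j hj => hω j (List.mem_cons_of_mem _ hj))
      _ (hT a (hω a List.mem_cons_self) y hy)

/-- append a letter to the end of a word: equiv onto nonempty words. -/
def concatEquiv (Ωs : Set ℕ) :
    Words Ωs × Ωs ≃ {ω : List ℕ // (∀ j ∈ ω, j ∈ Ωs) ∧ ω ≠ []} where
  toFun q := ⟨q.1.1 ++ [q.2.1], by
    constructor
    · intro j hj
      rcases List.mem_append.1 hj with h | h
      · exact q.1.2 j h
      · simpa [List.mem_singleton.1 h] using q.2.2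
    · simp⟩
  invFun ω := (⟨ω.1.dropLast, fun j hj => ω.2.1 j (List.dropLast_sublist ω.1 |>.subset hj)⟩,
    ⟨ω.1.getLast ω.2.2, ω.2.1 _ (List.getLast_mem ω.2.2)⟩)
  left_inv q := by
    ext
    · simp; rfl
    · simp
  right_inv ω := by
    apply Subtype.ext
    simpa using List.dropLast_append_getLast ω.2.2

/-- length fibers of `Words`. -/
def fibS (Ωs : Set ℕ) (t : ℕ) : Type := {ω : Words Ωs // ω.1.length = t}

def fibZeroEquiv (Ωs : Set ℕ) : fibS Ωs 0 ≃ Unit where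
  toFun _ := Unit.unit
  invFun _ := ⟨⟨[], by simp⟩, rfl⟩
  left_inv ω := by
    apply Subtype.ext; apply Subtype.ext
    exact (List.length_eq_zero_iff.1 ω.2).symm
  right_inv _ := rfl

def fibSuccEquiv (Ωs : Set ℕ) (t : ℕ) : fibS Ωs t × Ωs ≃ fibS Ωs (t+1) where
  toFun q := ⟨⟨q.1.1.1 ++ [q.2.1], by
      intro j hj
      rcases List.mem_append.1 hj with h | h
      · exact q.1.1.2 j h
      · simpa [List.mem_singleton.1 h] using q.2.2⟩, by simp [q.1.2]⟩
  invFun ω := (⟨⟨ω.1.1.dropLast,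
      fun j hj => ω.1.2 j (List.dropLast_sublist ω.1.1 |>.subset hj)⟩,
      by simp [ω.2]⟩,
    ⟨ω.1.1.getLast (List.ne_nil_of_length_pos (by rw [ω.2]; omega)),
      ω.1.2 _ (List.getLast_mem _)⟩)
  left_inv q := by
    ext
    · simp; rfl
    · simp
  right_inv ω := by
    apply Subtype.ext; apply Subtype.ext
    simpa using List.dropLast_append_getLast _

lemma summable_dominated {α : Type*} {g h : α → ℝ} (hg : Summable h)
    (hb : ∀ a, |g a| ≤ h a) : Summable g :=
  (Summable.of_nonneg_of_le (fun a => abs_nonneg _) hb hg).of_abs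

section Main

variable {Ωs : Set ℕ} {N : ℕ} {p : ℕ → ℝ} {ρ : ℝ} {k d : ℕ → ℕ → ℝ} {ι : ℝ → ℕ}

lemma abs_pk (hp : ∀ j ∈ Ωs, 0 < p j) (n : ℕ) (j : Ωs) :
    |p j.1 / k n j.1| = p j.1 / |k n j.1| := by
  rw [abs_div, abs_of_pos (hp j.1 j.2)]

variable (hρ0 : 0 < ρ) (hρ1 : ρ < 1)
  (hp : ∀ j ∈ Ωs, 0 < p j)
  (hι : ∀ x ∈ Icc (0:ℝ) 1, ι x ∈ Finset.Icc 1 N)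
  (hT : ∀ j ∈ Ωs, ∀ x ∈ Icc (0:ℝ) 1, Tpl k d ι j x ∈ Icc (0:ℝ) 1)
  (hA2 : ∀ n ∈ Finset.Icc 1 N,
    Summable (fun j : Ωs => p j.1 / |k n j.1|) ∧ ∑' j : Ωs, p j.1 / |k n j.1| ≤ ρ)

include hρ0 hρ1 hp hι hT hA2

lemma fib_summable (y : ℝ) (hy : y ∈ Icc (0:ℝ) 1) (t : ℕ) :
    Summable (fun ω : fibS Ωs t => |rdelta p k ι (Tpl k d ι) ω.1.1 y|) ∧
      ∑' ω : fibS Ωs t, |rdelta p k ι (Tpl k d ι) ω.1.1 y| ≤ ρ ^ t := by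
  induction t with
  | zero =>
    have e := fibZeroEquiv Ωs
    have hs : Summable ((fun ω : fibS Ωs 0 => |rdelta p k ι (Tpl k d ι) ω.1.1 y|) ∘ e.symm) :=
      summable_of_finite_support (Set.toFinite _)
    have hs' := e.symm.summable_iff.1 hs
    refine ⟨hs', ?_⟩
    rw [← e.symm.tsum_eq]
    have h1 : ∀ u : Unit, |rdelta p k ι (Tpl k d ι) ((e.symm u).1.1) y| = 1 := by
      intro u
      have h0 : (e.symm u).1.1 = ([] : List ℕ) := List.length_eq_zero_iff.1 (e.symm u).2
      rw [h0]
      simp [rdelta]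
    calc (∑' u : Unit, |rdelta p k ι (Tpl k d ι) ((e.symm u).1.1) y|)
        = ∑' _ : Unit, (1:ℝ) := tsum_congr h1
      _ = 1 := by simp
      _ ≤ ρ ^ 0 := by simp
  | succ t ih =>
    obtain ⟨ihs, ihb⟩ := ih
    have hmemA : ∀ ω : fibS Ωs t,
        ι (rwordApply (Tpl k d ι) ω.1.1 y) ∈ Finset.Icc 1 N := fun ω =>
      hι _ (orbit_mem k d ι Ωs hT ω.1.1 ω.1.2 y hy)
    have hF : ∀ q : fibS Ωs t × Ωs,
        |rdelta p k ι (Tpl k d ι) ((fibSuccEquiv Ωs t q).1.1) y|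
          = |rdelta p k ι (Tpl k d ι) q.1.1.1 y| *
              (p q.2.1 / |k (ι (rwordApply (Tpl k d ι) q.1.1.1 y)) q.2.1|) := by
      intro q
      have h0 : ((fibSuccEquiv Ωs t) q).1.1 = q.1.1.1 ++ [q.2.1] := rfl
      rw [h0, rdelta_concat, abs_mul, abs_pk hp]
    have hinner : ∀ ω : fibS Ωs t, Summable (fun j : Ωs =>
        |rdelta p k ι (Tpl k d ι) ω.1.1 y| *
          (p j.1 / |k (ι (rwordApply (Tpl k d ι) ω.1.1 y)) j.1|)) :=
      fun ω => ((hA2 _ (hmemA ω)).1).mul_left _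
    have hinner_tsum : ∀ ω : fibS Ωs t,
        (∑' j : Ωs, |rdelta p k ι (Tpl k d ι) ω.1.1 y| *
          (p j.1 / |k (ι (rwordApply (Tpl k d ι) ω.1.1 y)) j.1|))
          ≤ ρ * |rdelta p k ι (Tpl k d ι) ω.1.1 y| := by
      intro ω
      rw [tsum_mul_left]
      calc |rdelta p k ι (Tpl k d ι) ω.1.1 y| *
            ∑' j : Ωs, p j.1 / |k (ι (rwordApply (Tpl k d ι) ω.1.1 y)) j.1|
          ≤ |rdelta p k ι (Tpl k d ι) ω.1.1 y| * ρ :=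
            mul_le_mul_of_nonneg_left ((hA2 _ (hmemA ω)).2) (abs_nonneg _)
        _ = ρ * |rdelta p k ι (Tpl k d ι) ω.1.1 y| := mul_comm _ _
    have hFnonneg : ∀ q : fibS Ωs t × Ωs, 0 ≤ |rdelta p k ι (Tpl k d ι) q.1.1.1 y| *
        (p q.2.1 / |k (ι (rwordApply (Tpl k d ι) q.1.1.1 y)) q.2.1|) := fun q =>
      mul_nonneg (abs_nonneg _) (div_nonneg (hp _ q.2.2).le (abs_nonneg _))
    have houter : Summable (fun ω : fibS Ωs t => ∑' j : Ωs,
        |rdelta p k ι (Tpl k d ι) ω.1.1 y| *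
          (p j.1 / |k (ι (rwordApply (Tpl k d ι) ω.1.1 y)) j.1|)) := by
      apply summable_dominated (ihs.mul_left ρ)
      intro ω
      rw [abs_of_nonneg (tsum_nonneg (fun j => hFnonneg (ω, j)))]
      exact hinner_tsum ω
    have hFprod : Summable (fun q : fibS Ωs t × Ωs =>
        |rdelta p k ι (Tpl k d ι) q.1.1.1 y| *
          (p q.2.1 / |k (ι (rwordApply (Tpl k d ι) q.1.1.1 y)) q.2.1|)) :=
      (summable_prod_of_nonneg hFnonneg).2 ⟨fun ω => hinner ω, houter⟩
    have hFsummable : Summable (fun q : fibS Ωs t × Ωs =>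
        |rdelta p k ι (Tpl k d ι) ((fibSuccEquiv Ωs t q).1.1) y|) := by
      rw [funext hF]; exact hFprod
    have hg : Summable (fun ω : fibS Ωs (t+1) => |rdelta p k ι (Tpl k d ι) ω.1.1 y|) :=
      (fibSuccEquiv Ωs t).summable_iff.1 hFsummable
    refine ⟨hg, ?_⟩
    calc (∑' ω : fibS Ωs (t+1), |rdelta p k ι (Tpl k d ι) ω.1.1 y|)
        = ∑' q : fibS Ωs t × Ωs,
            |rdelta p k ι (Tpl k d ι) ((fibSuccEquiv Ωs t q).1.1) y| :=
          ((fibSuccEquiv Ωs t).tsum_eq _).symm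
      _ = ∑' q : fibS Ωs t × Ωs, |rdelta p k ι (Tpl k d ι) q.1.1.1 y| *
            (p q.2.1 / |k (ι (rwordApply (Tpl k d ι) q.1.1.1 y)) q.2.1|) := tsum_congr hF
      _ = ∑' ω : fibS Ωs t, ∑' j : Ωs, |rdelta p k ι (Tpl k d ι) ω.1.1 y| *
            (p j.1 / |k (ι (rwordApply (Tpl k d ι) ω.1.1 y)) j.1|) :=
          Summable.tsum_prod' hFprod hinner
      _ ≤ ∑' ω : fibS Ωs t, ρ * |rdelta p k ι (Tpl k d ι) ω.1.1 y| :=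
          Summable.tsum_le_tsum hinner_tsum houter (ihs.mul_left ρ)
      _ = ρ * ∑' ω : fibS Ωs t, |rdelta p k ι (Tpl k d ι) ω.1.1 y| := tsum_mul_left
      _ ≤ ρ * ρ ^ t := mul_le_mul_of_nonneg_left ihb hρ0.le
      _ = ρ ^ (t+1) := by ring

lemma summable_absdelta (y : ℝ) (hy : y ∈ Icc (0:ℝ) 1) :
    Summable (fun ω : Words Ωs => |rdelta p k ι (Tpl k d ι) ω.1 y|) := by
  have hs : Summable (fun q : Σ t, fibS Ωs t =>
      |rdelta p k ι (Tpl k d ι) q.2.1.1 y|) := by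
    apply (summable_sigma_of_nonneg (fun q => abs_nonneg _)).2
    exact ⟨fun t => (fib_summable hρ0 hρ1 hp hι hT hA2 y hy t).1,
      Summable.of_nonneg_of_le (fun t => tsum_nonneg fun ω => abs_nonneg _)
        (fun t => (fib_summable hρ0 hρ1 hp hι hT hA2 y hy t).2)
        (summable_geometric_of_lt_one hρ0.le hρ1)⟩
  have h2 : Summable ((fun ω : Words Ωs => |rdelta p k ι (Tpl k d ι) ω.1 y|) ∘
      (Equiv.sigmaFiberEquiv (fun ω : Words Ωs => ω.1.length))) :=
    hs.congr (fun q => rfl)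
  exact (Equiv.sigmaFiberEquiv (fun ω : Words Ωs => ω.1.length)).summable_iff.1 h2

lemma summable_Mfun (y : ℝ) (hy : y ∈ Icc (0:ℝ) 1) :
    Summable (fun q : Words Ωs × Ωs => |rdelta p k ι (Tpl k d ι) q.1.1 y| *
      (p q.2.1 / |k (ι (rwordApply (Tpl k d ι) q.1.1 y)) q.2.1|)) := by
  have habs := summable_absdelta hρ0 hρ1 hp hι hT hA2 y hy
  have hmemA : ∀ ω : Words Ωs,
      ι (rwordApply (Tpl k d ι) ω.1 y) ∈ Finset.Icc 1 N := fun ω =>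
    hι _ (orbit_mem k d ι Ωs hT ω.1 ω.2 y hy)
  have hFnonneg : ∀ q : Words Ωs × Ωs, 0 ≤ |rdelta p k ι (Tpl k d ι) q.1.1 y| *
      (p q.2.1 / |k (ι (rwordApply (Tpl k d ι) q.1.1 y)) q.2.1|) := fun q =>
    mul_nonneg (abs_nonneg _) (div_nonneg (hp _ q.2.2).le (abs_nonneg _))
  have hinner : ∀ ω : Words Ωs, Summable (fun j : Ωs =>
      |rdelta p k ι (Tpl k d ι) ω.1 y| *
        (p j.1 / |k (ι (rwordApply (Tpl k d ι) ω.1 y)) j.1|)) :=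
    fun ω => ((hA2 _ (hmemA ω)).1).mul_left _
  have hinner_tsum : ∀ ω : Words Ωs,
      (∑' j : Ωs, |rdelta p k ι (Tpl k d ι) ω.1 y| *
        (p j.1 / |k (ι (rwordApply (Tpl k d ι) ω.1 y)) j.1|))
        ≤ ρ * |rdelta p k ι (Tpl k d ι) ω.1 y| := by
    intro ω
    rw [tsum_mul_left]
    calc |rdelta p k ι (Tpl k d ι) ω.1 y| *
          ∑' j : Ωs, p j.1 / |k (ι (rwordApply (Tpl k d ι) ω.1 y)) j.1|
        ≤ |rdelta p k ι (Tpl k d ι) ω.1 y| * ρ :=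
          mul_le_mul_of_nonneg_left ((hA2 _ (hmemA ω)).2) (abs_nonneg _)
      _ = ρ * |rdelta p k ι (Tpl k d ι) ω.1 y| := mul_comm _ _
  have houter : Summable (fun ω : Words Ωs => ∑' j : Ωs,
      |rdelta p k ι (Tpl k d ι) ω.1 y| *
        (p j.1 / |k (ι (rwordApply (Tpl k d ι) ω.1 y)) j.1|)) := by
    apply summable_dominated (habs.mul_left ρ)
    intro ω
    rw [abs_of_nonneg (tsum_nonneg (fun j => hFnonneg (ω, j)))]
    exact hinner_tsum ω
  exact (summable_prod_of_nonneg hFnonneg).2 ⟨hinner, houter⟩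
lemma inner_step
    (hpsum : HasSum (fun j : Ωs => p j.1) 1)
    (hk : ∀ n ∈ Finset.Icc 1 N, ∀ j ∈ Ωs, k n j ≠ 0)
    (x : ℝ) (hx : x ∈ Icc (0:ℝ) 1) :
    HasSum (fun j : Ωs => p j.1 / k (ι x) j.1 * Tpl k d ι j.1 x)
      (x + ∑' j : Ωs, p j.1 / k (ι x) j.1 * d (ι x) j.1) := by
  have hn : ι x ∈ Finset.Icc 1 N := hι x hx
  have h1 : ∀ j : Ωs, p j.1 / k (ι x) j.1 * Tpl k d ι j.1 x
      = p j.1 * x + p j.1 / k (ι x) j.1 * d (ι x) j.1 := by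
    intro j
    have hkj := hk (ι x) hn j.1 j.2
    unfold Tpl
    field_simp
  have hsumT : Summable (fun j : Ωs => p j.1 / k (ι x) j.1 * Tpl k d ι j.1 x) := by
    apply Summable.of_abs
    apply Summable.of_nonneg_of_le (fun j => abs_nonneg _) ?_ (hA2 (ι x) hn).1
    intro j
    rw [abs_mul, abs_pk hp]
    have hTb : |Tpl k d ι j.1 x| ≤ 1 := by
      have h2 := hT j.1 j.2 x hx
      rw [abs_le]; exact ⟨by linarith [h2.1], h2.2⟩
    calc p j.1 / |k (ι x) j.1| * |Tpl k d ι j.1 x| ≤ p j.1 / |k (ι x) j.1| * 1 :=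
          mul_le_mul_of_nonneg_left hTb (div_nonneg (hp j.1 j.2).le (abs_nonneg _))
      _ = p j.1 / |k (ι x) j.1| := mul_one _
  have hsumpx : Summable (fun j : Ωs => p j.1 * x) := hpsum.summable.mul_right x
  have hsum2 : Summable (fun j : Ωs => p j.1 / k (ι x) j.1 * d (ι x) j.1) := by
    have heq : (fun j : Ωs => p j.1 / k (ι x) j.1 * d (ι x) j.1)
        = fun j : Ωs => p j.1 / k (ι x) j.1 * Tpl k d ι j.1 x - p j.1 * x := by
      funext j
      rw [h1 j]; ring
    rw [heq]
    exact hsumT.sub hsumpx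
  have hsum1 : HasSum (fun j : Ωs => p j.1 * x) x := by
    simpa using hpsum.mul_right x
  have hfin := hsum1.add hsum2.hasSum
  rw [show (fun j : Ωs => p j.1 / k (ι x) j.1 * Tpl k d ι j.1 x)
      = fun j : Ωs => p j.1 * x + p j.1 / k (ι x) j.1 * d (ι x) j.1 from funext h1]
  exact hfin

end Main

set_option maxHeartbeats 1600000 in
/-- for every `y ∈ [0,1]`, `−Σ_{n=1}^N D_n · KI_n(y) = y`,
where `D_n = S_n⁻¹ · Σ_j (p_j/k_{n,j})·d_{n,j}`. -/
theorem stmt_5 (Ωs : Set ℕ) (N : ℕ) (hN : 1 ≤ N) (p : ℕ → ℝ) (ρ : ℝ)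
    (hρ0 : 0 < ρ) (hρ1 : ρ < 1)
    (hp : ∀ j ∈ Ωs, 0 < p j) (hpsum : HasSum (fun j : Ωs => p j.1) 1)
    (k d : ℕ → ℕ → ℝ) (ι : ℝ → ℕ)
    (hι : ∀ x ∈ Icc (0:ℝ) 1, ι x ∈ Finset.Icc 1 N)
    (hk : ∀ n ∈ Finset.Icc 1 N, ∀ j ∈ Ωs, k n j ≠ 0)
    (hT : ∀ j ∈ Ωs, ∀ x ∈ Icc (0:ℝ) 1, Tpl k d ι j x ∈ Icc (0:ℝ) 1)
    (hA2 : ∀ n ∈ Finset.Icc 1 N,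
      Summable (fun j : Ωs => p j.1 / |k n j.1|) ∧
        ∑' j : Ωs, p j.1 / |k n j.1| ≤ ρ)
    (hS : ∀ n ∈ Finset.Icc 1 N, Sav Ωs p k n ≠ 0) :
    ∀ y ∈ Icc (0:ℝ) 1,
      -∑ n ∈ Finset.Icc 1 N,
          ((Sav Ωs p k n)⁻¹ * ∑' j : Ωs, p j.1 / k n j.1 * d n j.1) *
            KI Ωs p k ι (Tpl k d ι) n y = y := by
  classical
  intro y hy
  set c : ℕ → ℝ := fun n => ∑' j : Ωs, p j.1 / k n j.1 * d n j.1 with hc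
  set G : ℕ → ℝ := fun n => ∑' ω : Words Ωs,
    if ι (rwordApply (Tpl k d ι) ω.1 y) = n then rdelta p k ι (Tpl k d ι) ω.1 y else 0 with hGdef
  have hAmem : ∀ ω : Words Ωs, rwordApply (Tpl k d ι) ω.1 y ∈ Icc (0:ℝ) 1 :=
    fun ω => orbit_mem k d ι Ωs hT ω.1 ω.2 y hy
  have hnmem : ∀ ω : Words Ωs, ι (rwordApply (Tpl k d ι) ω.1 y) ∈ Finset.Icc 1 N :=
    fun ω => hι _ (hAmem ω)
  have habs : Summable (fun ω : Words Ωs => |rdelta p k ι (Tpl k d ι) ω.1 y|) :=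
    summable_absdelta hρ0 hρ1 hp hι hT hA2 y hy
  have hδA : Summable (fun ω : Words Ωs =>
      rdelta p k ι (Tpl k d ι) ω.1 y * rwordApply (Tpl k d ι) ω.1 y) := by
    apply summable_dominated habs
    intro ω
    rw [abs_mul]
    have hb : |rwordApply (Tpl k d ι) ω.1 y| ≤ 1 := by
      have h2 := hAmem ω; rw [abs_le]; exact ⟨by linarith [h2.1], h2.2⟩
    calc |rdelta p k ι (Tpl k d ι) ω.1 y| * |rwordApply (Tpl k d ι) ω.1 y|
        ≤ |rdelta p k ι (Tpl k d ι) ω.1 y| * 1 :=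
          mul_le_mul_of_nonneg_left hb (abs_nonneg _)
      _ = _ := mul_one _
  have hcbound : ∀ ω : Words Ωs,
      |c (ι (rwordApply (Tpl k d ι) ω.1 y))| ≤ ∑ n ∈ Finset.Icc 1 N, |c n| :=
    fun ω => Finset.single_le_sum (f := fun n => |c n|) (fun i _ => abs_nonneg _) (hnmem ω)
  have hδc : Summable (fun ω : Words Ωs =>
      rdelta p k ι (Tpl k d ι) ω.1 y * c (ι (rwordApply (Tpl k d ι) ω.1 y))) := by
    apply summable_dominated (habs.mul_right (∑ n ∈ Finset.Icc 1 N, |c n|))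
    intro ω
    rw [abs_mul]
    exact mul_le_mul_of_nonneg_left (hcbound ω) (abs_nonneg _)
  have hG : ∀ n : ℕ, Summable (fun ω : Words Ωs =>
      if ι (rwordApply (Tpl k d ι) ω.1 y) = n then rdelta p k ι (Tpl k d ι) ω.1 y else 0) := by
    intro n
    apply summable_dominated habs
    intro ω
    by_cases h : ι (rwordApply (Tpl k d ι) ω.1 y) = n
    · rw [if_pos h]
    · rw [if_neg h]; simp [abs_nonneg]
  -- the inclusion of nonempty words into words
  have incl_inj : Function.Injective
      (fun ω : {ω : List ℕ // (∀ j ∈ ω, j ∈ Ωs) ∧ ω ≠ []} =>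
        (⟨ω.1, ω.2.1⟩ : Words Ωs)) := by
    intro a b h
    have h2 := congrArg Subtype.val h
    exact Subtype.ext h2
  have hNEsum : Summable (fun ω : {ω : List ℕ // (∀ j ∈ ω, j ∈ Ωs) ∧ ω ≠ []} =>
      rdelta p k ι (Tpl k d ι) ω.1 y * rwordApply (Tpl k d ι) ω.1 y) :=
    hδA.comp_injective incl_inj
  -- Step A : splitting off the empty word
  have hstepA : (∑' ω : Words Ωs,
        rdelta p k ι (Tpl k d ι) ω.1 y * rwordApply (Tpl k d ι) ω.1 y)
      = y + ∑' ω : {ω : List ℕ // (∀ j ∈ ω, j ∈ Ωs) ∧ ω ≠ []},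
          rdelta p k ι (Tpl k d ι) ω.1 y * rwordApply (Tpl k d ι) ω.1 y := by
    rw [Summable.tsum_eq_add_tsum_ite hδA (⟨[], by simp⟩ : Words Ωs)]
    congr 1
    · show rdelta p k ι (Tpl k d ι) [] y * rwordApply (Tpl k d ι) [] y = y
      simp [rdelta, rwordApply]
    · refine ((Function.Injective.tsum_eq incl_inj ?_).symm).trans (tsum_congr ?_)
      · intro ω hω
        by_cases h : ω = (⟨[], by simp⟩ : Words Ωs)
        · exact (Function.mem_support.1 hω (by subst h; exact if_pos rfl)).elim
        · exact ⟨⟨ω.1, ω.2, fun hnil => h (Subtype.ext hnil)⟩, Subtype.ext rfl⟩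
      · intro ω
        have hne : (⟨ω.1, ω.2.1⟩ : Words Ωs) ≠ (⟨[], by simp⟩ : Words Ωs) :=
          fun h => ω.2.2 (congrArg Subtype.val h)
        exact if_neg hne
  -- Step B : last-letter decomposition
  have hpt : ∀ q : Words Ωs × Ωs,
      rdelta p k ι (Tpl k d ι) ((concatEquiv Ωs q)).1 y *
          rwordApply (Tpl k d ι) ((concatEquiv Ωs q)).1 y
        = rdelta p k ι (Tpl k d ι) q.1.1 y *
            (p q.2.1 / k (ι (rwordApply (Tpl k d ι) q.1.1 y)) q.2.1 *
              Tpl k d ι q.2.1 (rwordApply (Tpl k d ι) q.1.1 y)) := by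
    intro q
    have h0 : ((concatEquiv Ωs) q).1 = q.1.1 ++ [q.2.1] := rfl
    rw [h0, rdelta_concat, rwordApply_concat]
    ring
  have hprod : Summable (fun q : Words Ωs × Ωs =>
      rdelta p k ι (Tpl k d ι) q.1.1 y *
        (p q.2.1 / k (ι (rwordApply (Tpl k d ι) q.1.1 y)) q.2.1 *
          Tpl k d ι q.2.1 (rwordApply (Tpl k d ι) q.1.1 y))) := by
    have h2 : Summable ((fun ω : {ω : List ℕ // (∀ j ∈ ω, j ∈ Ωs) ∧ ω ≠ []} =>
        rdelta p k ι (Tpl k d ι) ω.1 y * rwordApply (Tpl k d ι) ω.1 y) ∘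
          (concatEquiv Ωs)) := (concatEquiv Ωs).summable_iff.2 hNEsum
    exact h2.congr hpt
  have hinnerB : ∀ ω : Words Ωs, HasSum (fun j : Ωs =>
      rdelta p k ι (Tpl k d ι) ω.1 y *
        (p j.1 / k (ι (rwordApply (Tpl k d ι) ω.1 y)) j.1 *
          Tpl k d ι j.1 (rwordApply (Tpl k d ι) ω.1 y)))
      (rdelta p k ι (Tpl k d ι) ω.1 y *
        (rwordApply (Tpl k d ι) ω.1 y + c (ι (rwordApply (Tpl k d ι) ω.1 y)))) := by
    intro ω
    exact (inner_step hρ0 hρ1 hp hι hT hA2 hpsum hk _ (hAmem ω)).mul_left _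
  have hstepB : (∑' ω : {ω : List ℕ // (∀ j ∈ ω, j ∈ Ωs) ∧ ω ≠ []},
        rdelta p k ι (Tpl k d ι) ω.1 y * rwordApply (Tpl k d ι) ω.1 y)
      = (∑' ω : Words Ωs,
          rdelta p k ι (Tpl k d ι) ω.1 y * rwordApply (Tpl k d ι) ω.1 y)
        + ∑' ω : Words Ωs,
            rdelta p k ι (Tpl k d ι) ω.1 y * c (ι (rwordApply (Tpl k d ι) ω.1 y)) := by
    calc (∑' ω : {ω : List ℕ // (∀ j ∈ ω, j ∈ Ωs) ∧ ω ≠ []},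
          rdelta p k ι (Tpl k d ι) ω.1 y * rwordApply (Tpl k d ι) ω.1 y)
        = ∑' q : Words Ωs × Ωs,
            rdelta p k ι (Tpl k d ι) ((concatEquiv Ωs q)).1 y *
              rwordApply (Tpl k d ι) ((concatEquiv Ωs q)).1 y :=
          ((concatEquiv Ωs).tsum_eq _).symm
      _ = ∑' q : Words Ωs × Ωs,
            rdelta p k ι (Tpl k d ι) q.1.1 y *
              (p q.2.1 / k (ι (rwordApply (Tpl k d ι) q.1.1 y)) q.2.1 *
                Tpl k d ι q.2.1 (rwordApply (Tpl k d ι) q.1.1 y)) := tsum_congr hpt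
      _ = ∑' ω : Words Ωs, ∑' j : Ωs,
            rdelta p k ι (Tpl k d ι) ω.1 y *
              (p j.1 / k (ι (rwordApply (Tpl k d ι) ω.1 y)) j.1 *
                Tpl k d ι j.1 (rwordApply (Tpl k d ι) ω.1 y)) :=
          Summable.tsum_prod' hprod (fun ω => (hinnerB ω).summable)
      _ = ∑' ω : Words Ωs, rdelta p k ι (Tpl k d ι) ω.1 y *
            (rwordApply (Tpl k d ι) ω.1 y + c (ι (rwordApply (Tpl k d ι) ω.1 y))) :=
          tsum_congr (fun ω => (hinnerB ω).tsum_eq)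
      _ = ∑' ω : Words Ωs, (rdelta p k ι (Tpl k d ι) ω.1 y * rwordApply (Tpl k d ι) ω.1 y
            + rdelta p k ι (Tpl k d ι) ω.1 y * c (ι (rwordApply (Tpl k d ι) ω.1 y))) :=
          tsum_congr (fun ω => by ring)
      _ = _ := Summable.tsum_add hδA hδc
  have hR : (∑' ω : Words Ωs,
      rdelta p k ι (Tpl k d ι) ω.1 y * c (ι (rwordApply (Tpl k d ι) ω.1 y))) = -y := by
    have h3 := hstepA.trans (by rw [hstepB])
    linarith [h3]
  -- Step C : sorting by the interval index
  have hstepC : (∑' ω : Words Ωs,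
        rdelta p k ι (Tpl k d ι) ω.1 y * c (ι (rwordApply (Tpl k d ι) ω.1 y)))
      = ∑ n ∈ Finset.Icc 1 N, c n * G n := by
    calc (∑' ω : Words Ωs,
          rdelta p k ι (Tpl k d ι) ω.1 y * c (ι (rwordApply (Tpl k d ι) ω.1 y)))
        = ∑' ω : Words Ωs, ∑ n ∈ Finset.Icc 1 N,
            (if ι (rwordApply (Tpl k d ι) ω.1 y) = n
              then c n * rdelta p k ι (Tpl k d ι) ω.1 y else 0) := by
          apply tsum_congr
          intro ω
          rw [Finset.sum_ite_eq (Finset.Icc 1 N) (ι (rwordApply (Tpl k d ι) ω.1 y))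
            (fun n => c n * rdelta p k ι (Tpl k d ι) ω.1 y), if_pos (hnmem ω)]
          ring
      _ = ∑ n ∈ Finset.Icc 1 N, ∑' ω : Words Ωs,
            (if ι (rwordApply (Tpl k d ι) ω.1 y) = n
              then c n * rdelta p k ι (Tpl k d ι) ω.1 y else 0) := by
          apply Summable.tsum_finsetSum
          intro n _
          exact ((hG n).mul_left (c n)).congr (fun ω => by rw [mul_ite, mul_zero])
      _ = ∑ n ∈ Finset.Icc 1 N, c n * G n := by
          apply Finset.sum_congr rfl
          intro n _
          calc (∑' ω : Words Ωs, (if ι (rwordApply (Tpl k d ι) ω.1 y) = n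
                then c n * rdelta p k ι (Tpl k d ι) ω.1 y else 0))
              = ∑' ω : Words Ωs, c n * (if ι (rwordApply (Tpl k d ι) ω.1 y) = n
                then rdelta p k ι (Tpl k d ι) ω.1 y else 0) :=
                tsum_congr (fun ω => by rw [mul_ite, mul_zero])
            _ = c n * G n := tsum_mul_left
  -- Step D : KI in terms of G
  have hKI : ∀ n ∈ Finset.Icc 1 N,
      KI Ωs p k ι (Tpl k d ι) n y = Sav Ωs p k n * G n := by
    intro n hn
    have hpk : Summable (fun j : Ωs => p j.1 / k n j.1) :=
      Summable.of_abs (((hA2 n hn).1).congr (fun j => (abs_pk hp n j).symm))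
    have hpt2 : ∀ q : Words Ωs × Ωs,
        (if ι (rwordApply (Tpl k d ι) ((concatEquiv Ωs q)).1.dropLast y) = n
          then rdelta p k ι (Tpl k d ι) ((concatEquiv Ωs q)).1 y else 0)
        = (if ι (rwordApply (Tpl k d ι) q.1.1 y) = n
            then rdelta p k ι (Tpl k d ι) q.1.1 y * (p q.2.1 / k n q.2.1) else 0) := by
      intro q
      have h0 : ((concatEquiv Ωs) q).1 = q.1.1 ++ [q.2.1] := rfl
      have hdl : (q.1.1 ++ [q.2.1]).dropLast = q.1.1 := by simp
      rw [h0, hdl, rdelta_concat]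
      by_cases hcase : ι (rwordApply (Tpl k d ι) q.1.1 y) = n
      · rw [if_pos hcase, if_pos hcase, hcase]
      · rw [if_neg hcase, if_neg hcase]
    have hM := summable_Mfun hρ0 hρ1 hp hι hT hA2 y hy
    have hF'sum : Summable (fun q : Words Ωs × Ωs =>
        if ι (rwordApply (Tpl k d ι) q.1.1 y) = n
          then rdelta p k ι (Tpl k d ι) q.1.1 y * (p q.2.1 / k n q.2.1) else 0) := by
      apply summable_dominated hM
      intro q
      by_cases hcase : ι (rwordApply (Tpl k d ι) q.1.1 y) = n
      · rw [if_pos hcase, abs_mul, abs_pk hp, hcase]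
      · rw [if_neg hcase]
        simpa using mul_nonneg (abs_nonneg _) (div_nonneg (hp _ q.2.2).le (abs_nonneg _))
    have hinnerD : ∀ ω : Words Ωs, Summable (fun j : Ωs =>
        if ι (rwordApply (Tpl k d ι) ω.1 y) = n
          then rdelta p k ι (Tpl k d ι) ω.1 y * (p j.1 / k n j.1) else 0) := by
      intro ω
      by_cases hcase : ι (rwordApply (Tpl k d ι) ω.1 y) = n
      · exact ((hpk.mul_left _).congr (fun j => by rw [if_pos hcase]))
      · exact (summable_zero.congr (fun j => by rw [if_neg hcase]))
    calc KI Ωs p k ι (Tpl k d ι) n y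
        = ∑' q : Words Ωs × Ωs,
            (if ι (rwordApply (Tpl k d ι) ((concatEquiv Ωs q)).1.dropLast y) = n
              then rdelta p k ι (Tpl k d ι) ((concatEquiv Ωs q)).1 y else 0) :=
          ((concatEquiv Ωs).tsum_eq _).symm
      _ = ∑' q : Words Ωs × Ωs,
            (if ι (rwordApply (Tpl k d ι) q.1.1 y) = n
              then rdelta p k ι (Tpl k d ι) q.1.1 y * (p q.2.1 / k n q.2.1) else 0) :=
          tsum_congr hpt2
      _ = ∑' ω : Words Ωs, ∑' j : Ωs,
            (if ι (rwordApply (Tpl k d ι) ω.1 y) = n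
              then rdelta p k ι (Tpl k d ι) ω.1 y * (p j.1 / k n j.1) else 0) :=
          Summable.tsum_prod' hF'sum hinnerD
      _ = ∑' ω : Words Ωs,
            (if ι (rwordApply (Tpl k d ι) ω.1 y) = n
              then rdelta p k ι (Tpl k d ι) ω.1 y * Sav Ωs p k n else 0) := by
          apply tsum_congr
          intro ω
          by_cases hcase : ι (rwordApply (Tpl k d ι) ω.1 y) = n
          · simp only [if_pos hcase]
            rw [tsum_mul_left]
            rfl
          · simp only [if_neg hcase]
            exact tsum_zero
      _ = ∑' ω : Words Ωs, Sav Ωs p k n *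
            (if ι (rwordApply (Tpl k d ι) ω.1 y) = n
              then rdelta p k ι (Tpl k d ι) ω.1 y else 0) :=
          tsum_congr (fun ω => by
            by_cases hcase : ι (rwordApply (Tpl k d ι) ω.1 y) = n
            · simp [hcase, mul_comm]
            · simp [hcase])
      _ = Sav Ωs p k n * G n := tsum_mul_left
  -- final assembly
  have hsum_eq : ∑ n ∈ Finset.Icc 1 N,
      ((Sav Ωs p k n)⁻¹ * c n) * KI Ωs p k ι (Tpl k d ι) n y
      = ∑ n ∈ Finset.Icc 1 N, c n * G n := by
    apply Finset.sum_congr rfl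
    intro n hn
    rw [hKI n hn]
    have hSn := hS n hn
    field_simp
  calc -∑ n ∈ Finset.Icc 1 N,
        ((Sav Ωs p k n)⁻¹ * ∑' j : Ωs, p j.1 / k n j.1 * d n j.1) *
          KI Ωs p k ι (Tpl k d ι) n y
      = -∑ n ∈ Finset.Icc 1 N, c n * G n := by rw [← hsum_eq]
    _ = -(∑' ω : Words Ωs,
          rdelta p k ι (Tpl k d ι) ω.1 y * c (ι (rwordApply (Tpl k d ι) ω.1 y))) := by
        rw [hstepC]
    _ = y := by rw [hR]; ring

end
end

section
/- For every y ∈ [0,1]: y = Σ_{t≥0} Σ_{ω∈Ωᵗ} δ_ω(y,t)·C(T_ω(y)) − Σ_{i=1}^{N−1} (η_i + φ_i)·KB_i(y), where for y ∈ I_n, C(y) = Σ_{j∈Ω} (Σ_{i=1}^{n−1} p_j/|k_{i,j}| + (p_j/|k_{n,j}|)·1_{(−∞,0)}(k_{n,j})), η_i = Σ_j p_j(1_{(0,∞)}(k_{i,j}) − a_{i,j})/k_{i,j} and φ_i = Σ_j p_j(−1_{(−∞,0)}(k_{i+1,j}) + b_{i,j})/k_{i+1,j}. -/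
open Set

noncomputable section

/-- `a_{i,j} = k_{i,j} z_i + d_{i,j}`, the left limit of `T_j` at `z_i`. -/
def aPt (k d : ℕ → ℕ → ℝ) (z : ℕ → ℝ) (i j : ℕ) : ℝ := k i j * z i + d i j

/-- `b_{i,j} = k_{i+1,j} z_i + d_{i+1,j}`, the right limit of `T_j` at `z_i`. -/
def bPt (k d : ℕ → ℕ → ℝ) (z : ℕ → ℝ) (i j : ℕ) : ℝ := k (i + 1) j * z i + d (i + 1) j

/-- the entries `μ_{n,i}` of the fundamental matrix (Definition 3.2). -/
def fundM (Ωs : Set ℕ) (p : ℕ → ℝ) (k d : ℕ → ℕ → ℝ) (ι : ℝ → ℕ) (z : ℕ → ℝ)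
    (n i : ℕ) : ℝ :=
  ∑' j : Ωs,
    ((if n = i then p j.1 / k i j.1 else 0) -
      (if n = i + 1 then p j.1 / k (i + 1) j.1 else 0) +
      (p j.1 / k i j.1 * KI Ωs p k ι (Tpl k d ι) n (aPt k d z i j.1) -
        p j.1 / k (i + 1) j.1 * KI Ωs p k ι (Tpl k d ι) n (bPt k d z i j.1)))

/-- `η_i = Σ_j p_j (1_{(0,∞)}(k_{i,j}) − a_{i,j}) / k_{i,j}`. -/
def etaC (Ωs : Set ℕ) (p : ℕ → ℝ) (k d : ℕ → ℕ → ℝ) (z : ℕ → ℝ) (i : ℕ) : ℝ :=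
  ∑' j : Ωs, p j.1 * ((if 0 < k i j.1 then (1:ℝ) else 0) - aPt k d z i j.1) / k i j.1

/-- `φ_i = Σ_j p_j (−1_{(−∞,0)}(k_{i+1,j}) + b_{i,j}) / k_{i+1,j}`. -/
def phiC (Ωs : Set ℕ) (p : ℕ → ℝ) (k d : ℕ → ℕ → ℝ) (z : ℕ → ℝ) (i : ℕ) : ℝ :=
  ∑' j : Ωs,
    p j.1 * (-(if k (i + 1) j.1 < 0 then (1:ℝ) else 0) + bPt k d z i j.1) / k (i + 1) j.1

/-- for `y ∈ I_n`, `C(y) = Σ_j (Σ_{i=1}^{n-1} p_j/|k_{i,j}| +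
(p_j/|k_{n,j}|)·1_{(−∞,0)}(k_{n,j}))`. -/
def CC (Ωs : Set ℕ) (p : ℕ → ℝ) (k : ℕ → ℕ → ℝ) (ι : ℝ → ℕ) (y : ℝ) : ℝ :=
  ∑' j : Ωs,
    ((∑ i ∈ Finset.Ico 1 (ι y), p j.1 / |k i j.1|) +
      (if k (ι y) j.1 < 0 then p j.1 / |k (ι y) j.1| else 0))

section AuxStmt10

open Finset in
private lemma keyIdent (P : ℝ) (K D Z : ℕ → ℝ) (N : ℕ)
    (hK : ∀ i, 1 ≤ i → i ≤ N → K i ≠ 0) (hD1 : D 1 = if 0 < K 1 then 0 else 1) :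
    ∀ n, 1 ≤ n → n ≤ N →
      ((∑ i ∈ Finset.Ico 1 n, P / |K i|) + (if K n < 0 then P / |K n| else 0))
        + P * D n / K n
        - ∑ i ∈ Finset.Ico 1 n,
            (P * ((if 0 < K i then (1:ℝ) else 0) - (K i * Z i + D i)) / K i
              + P * (-(if K (i+1) < 0 then (1:ℝ) else 0) + (K (i+1) * Z i + D (i+1))) / K (i+1)) = 0 := by
  intro n h1
  induction n, h1 using Nat.le_induction with
  | base =>
      intro hN
      have hk1 := hK 1 le_rfl hN
      simp only [Finset.Ico_self, Finset.sum_empty]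
      rcases hk1.lt_or_gt with h | h
      · simp only [hD1, if_neg (asymm h), if_pos h, abs_of_neg h]
        rw [div_neg]
        ring
      · simp only [hD1, if_pos h, if_neg (asymm h)]
        simp
  | succ n h1 ih =>
      intro hN
      have hn : n ≤ N := by omega
      have ihn := ih hn
      have hkn := hK n h1 hn
      have hkn1 := hK (n+1) (by omega) hN
      rw [Finset.sum_Ico_succ_top h1, Finset.sum_Ico_succ_top h1]
      have key : P / |K n| + ((if K (n+1) < 0 then P / |K (n+1)| else 0)
            - (if K n < 0 then P / |K n| else 0))
          + (P * D (n+1) / K (n+1) - P * D n / K n)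
          - (P * ((if 0 < K n then (1:ℝ) else 0) - (K n * Z n + D n)) / K n
              + P * (-(if K (n+1) < 0 then (1:ℝ) else 0) + (K (n+1) * Z n + D (n+1))) / K (n+1))
          = 0 := by
        rcases hkn.lt_or_gt with h | h <;> rcases hkn1.lt_or_gt with h' | h'
        · simp only [abs_of_neg h, abs_of_neg h', if_pos h, if_pos h', if_neg (asymm h), div_neg]
          field_simp
          ring
        · simp only [abs_of_neg h, abs_of_pos h', if_pos h, if_neg (asymm h'),
            if_neg (asymm h), div_neg]
          field_simp
          ring
        · simp only [abs_of_pos h, abs_of_neg h', if_pos h', if_neg (asymm h), if_pos h, div_neg]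
          field_simp
          ring
        · simp only [abs_of_pos h, abs_of_pos h', if_neg (asymm h'), if_neg (asymm h),
            if_pos h, div_neg]
          field_simp
          ring
      linarith [key, ihn]

end AuxStmt10
section AuxStmt10b

private def nilW (Ωs : Set ℕ) : Words Ωs := ⟨[], by simp⟩

private def consW {Ωs : Set ℕ} (j : Ωs) (ω : Words Ωs) : Words Ωs :=
  ⟨j.1 :: ω.1, fun a ha => by
    rcases List.mem_cons.1 ha with rfl | h
    exacts [j.2, ω.2 a h]⟩

private def consWordsEquiv (Ωs : Set ℕ) :
    (Ωs × Words Ωs) ≃ {w : Words Ωs // w ∉ ({nilW Ωs} : Finset (Words Ωs))} where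
  toFun q := ⟨consW q.1 q.2, by
    simp only [Finset.mem_singleton]
    intro h
    exact List.cons_ne_nil _ _ (congrArg (fun w : Words Ωs => w.1) h)⟩
  invFun w :=
    match w with
    | ⟨⟨[], _⟩, hw⟩ => absurd (Finset.mem_singleton.2 rfl) hw
    | ⟨⟨a :: l, hl⟩, _⟩ =>
        (⟨a, hl a (List.mem_cons_self)⟩,
          ⟨l, fun b hb => hl b (List.mem_cons_of_mem a hb)⟩)
  left_inv q := rfl
  right_inv w := by
    rcases w with ⟨⟨l, hl⟩, hw⟩
    cases l with
    | nil => exact absurd (Finset.mem_singleton.2 rfl) hw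
    | cons a l => rfl

private lemma summable_consW {Ωs : Set ℕ} {f : Words Ωs → ℝ} (hf : Summable f) :
    Summable fun q : Ωs × Words Ωs => f (consW q.1 q.2) := by
  have h1 : Summable fun w : {w : Words Ωs // w ∉ ({nilW Ωs} : Finset (Words Ωs))} => f w.1 :=
    hf.subtype _
  exact (consWordsEquiv Ωs).summable_iff.2 h1

private lemma tsum_words_cons {Ωs : Set ℕ} {f : Words Ωs → ℝ} (hf : Summable f) :
    ∑' w : Words Ωs, f w
      = f (nilW Ωs) + ∑' (j : Ωs), ∑' w : Words Ωs, f (consW j w) := by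
  have h0 := Summable.sum_add_tsum_subtype_compl hf ({nilW Ωs} : Finset (Words Ωs))
  rw [Finset.sum_singleton] at h0
  have h2 := summable_consW hf
  have h3 : ∑' q : Ωs × Words Ωs, f (consW q.1 q.2)
      = ∑' w : {w : Words Ωs // w ∉ ({nilW Ωs} : Finset (Words Ωs))}, f w.1 :=
    (consWordsEquiv Ωs).tsum_eq (fun w => f w.1)
  rw [← h0]
  congr 1
  rw [← h3, Summable.tsum_prod' h2 (fun j => h2.prod_factor j)]

private def WL (Ωs : Set ℕ) (t : ℕ) : Type := {l : List ℕ // (∀ j ∈ l, j ∈ Ωs) ∧ l.length = t}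

private instance (Ωs : Set ℕ) : Unique (WL Ωs 0) where
  default := ⟨[], by simp, rfl⟩
  uniq := by
    rintro ⟨l, hl, h0⟩
    exact Subtype.ext (List.length_eq_zero_iff.mp h0)

private def wlConsEquiv (Ωs : Set ℕ) (t : ℕ) : (Ωs × WL Ωs t) ≃ WL Ωs (t + 1) where
  toFun q := ⟨q.1.1 :: q.2.1,
    ⟨fun a ha => by
      rcases List.mem_cons.1 ha with rfl | h
      exacts [q.1.2, q.2.2.1 a h],
      by simp [q.2.2.2]⟩⟩
  invFun w :=
    match w with
    | ⟨[], h⟩ => absurd h.2 (by simp)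
    | ⟨a :: l, h⟩ =>
        (⟨a, h.1 a (List.mem_cons_self)⟩,
          ⟨l, fun b hb => h.1 b (List.mem_cons_of_mem a hb), Nat.succ_injective h.2⟩)
  left_inv q := rfl
  right_inv w := by
    rcases w with ⟨l, hl⟩
    cases l with
    | nil => exact absurd hl.2 (by simp)
    | cons a l => rfl

private def wordsSigmaEquiv (Ωs : Set ℕ) : Words Ωs ≃ (Σ t : ℕ, WL Ωs t) where
  toFun ω := ⟨ω.1.length, ⟨ω.1, ω.2, rfl⟩⟩
  invFun s := ⟨s.2.1, s.2.2.1⟩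
  left_inv ω := rfl
  right_inv := by rintro ⟨t, ⟨l, hl, rfl⟩⟩; rfl

end AuxStmt10b
section AuxStmt10c
set_option maxHeartbeats 1000000

open Set

private lemma wl_abs (Ωs : Set ℕ) (p : ℕ → ℝ) (k : ℕ → ℕ → ℝ) (ι : ℝ → ℕ)
    (T : ℕ → ℝ → ℝ) (ρ : ℝ)
    (hT : ∀ j ∈ Ωs, ∀ x ∈ Icc (0:ℝ) 1, T j x ∈ Icc (0:ℝ) 1)
    (hstep : ∀ x ∈ Icc (0:ℝ) 1, Summable (fun j : Ωs => |p j.1 / k (ι x) j.1|) ∧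
      ∑' j : Ωs, |p j.1 / k (ι x) j.1| ≤ ρ) :
    ∀ t : ℕ, ∀ x ∈ Icc (0:ℝ) 1,
      Summable (fun ω : WL Ωs t => |rdelta p k ι T ω.1 x|) ∧
        ∑' ω : WL Ωs t, |rdelta p k ι T ω.1 x| ≤ ρ ^ t := by
  intro t
  induction t with
  | zero =>
      intro x hx
      constructor
      · exact Summable.of_finite
      · have : ∑' ω : WL Ωs 0, |rdelta p k ι T ω.1 x| = |rdelta p k ι T [] x| := by
          apply tsum_eq_single (default : WL Ωs 0)
          intro b hb
          exact (hb (Unique.eq_default b)).elim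
        rw [this]
        simp [rdelta]
  | succ t ih =>
      intro x hx
      obtain ⟨hs, hb⟩ := hstep x hx
      have hg0 : ∀ q : Ωs × WL Ωs t,
          0 ≤ |p q.1.1 / k (ι x) q.1.1| * |rdelta p k ι T q.2.1 (T q.1.1 x)| :=
        fun q => mul_nonneg (abs_nonneg _) (abs_nonneg _)
      have hfib : ∀ j : Ωs, Summable fun ω : WL Ωs t =>
          |p j.1 / k (ι x) j.1| * |rdelta p k ι T ω.1 (T j.1 x)| :=
        fun j => ((ih (T j.1 x) (hT j.1 j.2 x hx)).1).mul_left _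
      have hrow_le : ∀ j : Ωs, (∑' ω : WL Ωs t,
          |p j.1 / k (ι x) j.1| * |rdelta p k ι T ω.1 (T j.1 x)|)
          ≤ |p j.1 / k (ι x) j.1| * ρ ^ t := by
        intro j
        rw [tsum_mul_left]
        exact mul_le_mul_of_nonneg_left (ih (T j.1 x) (hT j.1 j.2 x hx)).2 (abs_nonneg _)
      have hrow0 : ∀ j : Ωs, 0 ≤ ∑' ω : WL Ωs t,
          |p j.1 / k (ι x) j.1| * |rdelta p k ι T ω.1 (T j.1 x)| :=
        fun j => tsum_nonneg (fun ω => hg0 (j, ω))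
      have hsum2 : Summable fun j : Ωs => ∑' ω : WL Ωs t,
          |p j.1 / k (ι x) j.1| * |rdelta p k ι T ω.1 (T j.1 x)| :=
        Summable.of_nonneg_of_le hrow0 hrow_le (hs.mul_right _)
      have hgsum : Summable fun q : Ωs × WL Ωs t =>
          |p q.1.1 / k (ι x) q.1.1| * |rdelta p k ι T q.2.1 (T q.1.1 x)| :=
        (summable_prod_of_nonneg hg0).2 ⟨hfib, hsum2⟩
      have hρ0 : 0 ≤ ρ := le_trans (tsum_nonneg (fun j => abs_nonneg _)) hb
      have hcomp : (fun q : Ωs × WL Ωs t =>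
            |rdelta p k ι T ((wlConsEquiv Ωs t) q).1 x|)
          = fun q : Ωs × WL Ωs t =>
            |p q.1.1 / k (ι x) q.1.1| * |rdelta p k ι T q.2.1 (T q.1.1 x)| := by
        funext q
        show |rdelta p k ι T (q.1.1 :: q.2.1) x| = _
        simp only [rdelta, abs_mul]
      constructor
      · have hsc : Summable fun q : Ωs × WL Ωs t =>
            |rdelta p k ι T ((wlConsEquiv Ωs t) q).1 x| := by
          rw [hcomp]; exact hgsum
        exact ((wlConsEquiv Ωs t).summable_iff
          (f := fun ω : WL Ωs (t+1) => |rdelta p k ι T ω.1 x|)).1 hsc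
      · have he : ∑' ω : WL Ωs (t+1), |rdelta p k ι T ω.1 x|
            = ∑' q : Ωs × WL Ωs t,
                |p q.1.1 / k (ι x) q.1.1| * |rdelta p k ι T q.2.1 (T q.1.1 x)| := by
          rw [← ((wlConsEquiv Ωs t).tsum_eq
            (fun ω : WL Ωs (t+1) => |rdelta p k ι T ω.1 x|)), hcomp]
        rw [he, Summable.tsum_prod' hgsum hfib]
        calc ∑' (j : Ωs), ∑' (ω : WL Ωs t),
              |p j.1 / k (ι x) j.1| * |rdelta p k ι T ω.1 (T j.1 x)|
            ≤ ∑' j : Ωs, |p j.1 / k (ι x) j.1| * ρ ^ t :=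
              Summable.tsum_le_tsum hrow_le hsum2 (hs.mul_right _)
          _ = (∑' j : Ωs, |p j.1 / k (ι x) j.1|) * ρ ^ t := tsum_mul_right
          _ ≤ ρ * ρ ^ t := mul_le_mul_of_nonneg_right hb (pow_nonneg hρ0 t)
          _ = ρ ^ (t+1) := by ring

private lemma words_abs (Ωs : Set ℕ) (p : ℕ → ℝ) (k : ℕ → ℕ → ℝ) (ι : ℝ → ℕ)
    (T : ℕ → ℝ → ℝ) (ρ : ℝ) (hρ1 : ρ < 1)
    (hT : ∀ j ∈ Ωs, ∀ x ∈ Icc (0:ℝ) 1, T j x ∈ Icc (0:ℝ) 1)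
    (hstep : ∀ x ∈ Icc (0:ℝ) 1, Summable (fun j : Ωs => |p j.1 / k (ι x) j.1|) ∧
      ∑' j : Ωs, |p j.1 / k (ι x) j.1| ≤ ρ) :
    ∀ x ∈ Icc (0:ℝ) 1,
      Summable (fun ω : Words Ωs => |rdelta p k ι T ω.1 x|) ∧
        ∑' ω : Words Ωs, |rdelta p k ι T ω.1 x| ≤ (1 - ρ)⁻¹ := by
  intro x hx
  have hρ0 : 0 ≤ ρ := le_trans (tsum_nonneg (fun j => abs_nonneg _)) (hstep x hx).2
  have hwl := wl_abs Ωs p k ι T ρ hT hstep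
  set F : (Σ t : ℕ, WL Ωs t) → ℝ := fun s => |rdelta p k ι T s.2.1 x| with hF
  have hF0 : ∀ s, 0 ≤ F s := fun s => abs_nonneg _
  have hfib : ∀ t : ℕ, Summable fun ω : WL Ωs t => F ⟨t, ω⟩ := fun t => (hwl t x hx).1
  have hgeo : Summable fun t : ℕ => ρ ^ t := summable_geometric_of_lt_one hρ0 hρ1
  have hrow : Summable fun t : ℕ => ∑' ω : WL Ωs t, F ⟨t, ω⟩ :=
    Summable.of_nonneg_of_le (fun t => tsum_nonneg fun ω => hF0 _)
      (fun t => (hwl t x hx).2) hgeo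
  have hFsum : Summable F := (summable_sigma_of_nonneg hF0).2 ⟨hfib, hrow⟩
  have hcomp : (fun ω : Words Ωs => F ((wordsSigmaEquiv Ωs) ω))
      = fun ω : Words Ωs => |rdelta p k ι T ω.1 x| := rfl
  constructor
  · exact ((wordsSigmaEquiv Ωs).summable_iff (f := F)).2 hFsum
  · have he : ∑' ω : Words Ωs, |rdelta p k ι T ω.1 x| = ∑' s, F s :=
      (wordsSigmaEquiv Ωs).tsum_eq F
    rw [he, Summable.tsum_sigma' hfib hFsum]
    calc ∑' (t : ℕ), ∑' (ω : WL Ωs t), F ⟨t, ω⟩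
        ≤ ∑' t : ℕ, ρ ^ t := Summable.tsum_le_tsum (fun t => (hwl t x hx).2) hrow hgeo
      _ = (1 - ρ)⁻¹ := tsum_geometric_of_lt_one hρ0 hρ1

private lemma rword_mem {Ωs : Set ℕ} {T : ℕ → ℝ → ℝ}
    (hT : ∀ j ∈ Ωs, ∀ x ∈ Icc (0:ℝ) 1, T j x ∈ Icc (0:ℝ) 1) :
    ∀ (l : List ℕ), (∀ j ∈ l, j ∈ Ωs) → ∀ x ∈ Icc (0:ℝ) 1,
      rwordApply T l x ∈ Icc (0:ℝ) 1 := by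
  intro l
  induction l with
  | nil => intro _ x hx; simpa [rwordApply] using hx
  | cons a l ih =>
      intro hl x hx
      exact ih (fun b hb => hl b (List.mem_cons_of_mem a hb))
        (T a x) (hT a (hl a (List.mem_cons_self)) x hx)

private lemma abs_tsum_le_real {α : Type*} {f : α → ℝ} (h : Summable fun i => |f i|) :
    |∑' i, f i| ≤ ∑' i, |f i| := by
  have h' : Summable fun i => ‖f i‖ := by simpa [Real.norm_eq_abs] using h
  simpa [Real.norm_eq_abs] using norm_tsum_le_tsum_norm h'

end AuxStmt10c
section AuxStmt10d
set_option maxHeartbeats 1000000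

open Set

private def Gf (Ωs : Set ℕ) (p : ℕ → ℝ) (k d : ℕ → ℕ → ℝ) (ι : ℝ → ℕ) (x : ℝ) : ℝ :=
  ∑' ω : Words Ωs,
    rdelta p k ι (Tpl k d ι) ω.1 x * CC Ωs p k ι (rwordApply (Tpl k d ι) ω.1 x)

private def Sf (Ωs : Set ℕ) (N : ℕ) (p : ℕ → ℝ) (k d : ℕ → ℕ → ℝ) (ι : ℝ → ℕ)
    (z : ℕ → ℝ) (x : ℝ) : ℝ :=
  ∑ i ∈ Finset.Icc 1 (N - 1),
    (etaC Ωs p k d z i + phiC Ωs p k d z i) * KB Ωs p k ι (Tpl k d ι) i x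

private def Ef (Ωs : Set ℕ) (N : ℕ) (p : ℕ → ℝ) (k d : ℕ → ℕ → ℝ) (ι : ℝ → ℕ)
    (z : ℕ → ℝ) (x : ℝ) : ℝ :=
  Gf Ωs p k d ι x - Sf Ωs N p k d ι z x - x

variable {Ωs : Set ℕ} {N : ℕ} {p : ℕ → ℝ} {ρ : ℝ} {k d : ℕ → ℕ → ℝ} {ι : ℝ → ℕ} {z : ℕ → ℝ}

private lemma hstep_lemma (hp : ∀ j ∈ Ωs, 0 < p j)
    (hι : ∀ x ∈ Icc (0:ℝ) 1, ι x ∈ Finset.Icc 1 N)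
    (hA2 : ∀ n ∈ Finset.Icc 1 N,
      Summable (fun j : Ωs => p j.1 / |k n j.1|) ∧ ∑' j : Ωs, p j.1 / |k n j.1| ≤ ρ) :
    ∀ x ∈ Icc (0:ℝ) 1,
      Summable (fun j : Ωs => |p j.1 / k (ι x) j.1|) ∧
        ∑' j : Ωs, |p j.1 / k (ι x) j.1| ≤ ρ := by
  intro x hx
  have habs : (fun j : Ωs => |p j.1 / k (ι x) j.1|)
      = fun j : Ωs => p j.1 / |k (ι x) j.1| := by
    funext j
    rw [abs_div, abs_of_pos (hp j.1 j.2)]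
  rw [habs]
  exact ⟨(hA2 (ι x) (hι x hx)).1, (hA2 (ι x) (hι x hx)).2⟩

private lemma CC_facts (hp : ∀ j ∈ Ωs, 0 < p j)
    (hι : ∀ x ∈ Icc (0:ℝ) 1, ι x ∈ Finset.Icc 1 N)
    (hA2 : ∀ n ∈ Finset.Icc 1 N,
      Summable (fun j : Ωs => p j.1 / |k n j.1|) ∧ ∑' j : Ωs, p j.1 / |k n j.1| ≤ ρ) :
    ∀ x ∈ Icc (0:ℝ) 1,
      Summable (fun j : Ωs => (∑ i ∈ Finset.Ico 1 (ι x), p j.1 / |k i j.1|)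
          + (if k (ι x) j.1 < 0 then p j.1 / |k (ι x) j.1| else 0))
        ∧ 0 ≤ CC Ωs p k ι x
        ∧ CC Ωs p k ι x ≤ 2 * ∑ i ∈ Finset.Icc 1 N, ∑' j : Ωs, p j.1 / |k i j.1| := by
  intro x hx
  have hKK : Summable (fun j : Ωs => ∑ i ∈ Finset.Icc 1 N, p j.1 / |k i j.1|) :=
    summable_sum (fun i hi => (hA2 i hi).1)
  have hterm0 : ∀ j : Ωs, (0:ℝ) ≤ (∑ i ∈ Finset.Ico 1 (ι x), p j.1 / |k i j.1|)
      + (if k (ι x) j.1 < 0 then p j.1 / |k (ι x) j.1| else 0) := by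
    intro j
    apply add_nonneg
    · exact Finset.sum_nonneg fun i _ => div_nonneg (hp j.1 j.2).le (abs_nonneg _)
    · split_ifs
      · exact div_nonneg (hp j.1 j.2).le (abs_nonneg _)
      · exact le_refl 0
  have hsub : Finset.Ico 1 (ι x) ⊆ Finset.Icc 1 N := by
    intro i hi
    have h1 := Finset.mem_Ico.1 hi
    have h2 := Finset.mem_Icc.1 (hι x hx)
    exact Finset.mem_Icc.2 ⟨h1.1, by omega⟩
  have htermle : ∀ j : Ωs, (∑ i ∈ Finset.Ico 1 (ι x), p j.1 / |k i j.1|)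
      + (if k (ι x) j.1 < 0 then p j.1 / |k (ι x) j.1| else 0)
      ≤ (∑ i ∈ Finset.Icc 1 N, p j.1 / |k i j.1|)
        + ∑ i ∈ Finset.Icc 1 N, p j.1 / |k i j.1| := by
    intro j
    apply add_le_add
    · exact Finset.sum_le_sum_of_subset_of_nonneg hsub
        (fun i _ _ => div_nonneg (hp j.1 j.2).le (abs_nonneg _))
    · have h1 : p j.1 / |k (ι x) j.1| ≤ ∑ i ∈ Finset.Icc 1 N, p j.1 / |k i j.1| :=
        Finset.single_le_sum (f := fun i => p j.1 / |k i j.1|)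
          (fun i _ => div_nonneg (hp j.1 j.2).le (abs_nonneg _)) (hι x hx)
      split_ifs
      · exact h1
      · exact Finset.sum_nonneg fun i _ => div_nonneg (hp j.1 j.2).le (abs_nonneg _)
  have hsummable : Summable (fun j : Ωs => (∑ i ∈ Finset.Ico 1 (ι x), p j.1 / |k i j.1|)
      + (if k (ι x) j.1 < 0 then p j.1 / |k (ι x) j.1| else 0)) :=
    Summable.of_nonneg_of_le hterm0 htermle (hKK.add hKK)
  refine ⟨hsummable, tsum_nonneg hterm0, ?_⟩
  have h1 : CC Ωs p k ι x ≤ ∑' j : Ωs, ((∑ i ∈ Finset.Icc 1 N, p j.1 / |k i j.1|)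
      + ∑ i ∈ Finset.Icc 1 N, p j.1 / |k i j.1|) :=
    Summable.tsum_le_tsum htermle hsummable (hKK.add hKK)
  calc CC Ωs p k ι x ≤ _ := h1
    _ = (∑' j : Ωs, ∑ i ∈ Finset.Icc 1 N, p j.1 / |k i j.1|)
        + ∑' j : Ωs, ∑ i ∈ Finset.Icc 1 N, p j.1 / |k i j.1| := Summable.tsum_add hKK hKK
    _ = 2 * ∑' j : Ωs, ∑ i ∈ Finset.Icc 1 N, p j.1 / |k i j.1| := by ring
    _ = 2 * ∑ i ∈ Finset.Icc 1 N, ∑' j : Ωs, p j.1 / |k i j.1| := by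
        rw [Summable.tsum_finsetSum (fun i hi => (hA2 i hi).1)]


end AuxStmt10d
section AuxStmt10e
set_option maxHeartbeats 1000000
open Set

variable {Ωs : Set ℕ} {N : ℕ} {p : ℕ → ℝ} {ρ : ℝ} {k d : ℕ → ℕ → ℝ} {ι : ℝ → ℕ}
  {z : ℕ → ℝ} {T : ℕ → ℝ → ℝ}

private lemma dom_facts (hρ1 : ρ < 1)
    (hT : ∀ j ∈ Ωs, ∀ x ∈ Icc (0:ℝ) 1, T j x ∈ Icc (0:ℝ) 1)
    (hstep : ∀ x ∈ Icc (0:ℝ) 1, Summable (fun j : Ωs => |p j.1 / k (ι x) j.1|) ∧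
      ∑' j : Ωs, |p j.1 / k (ι x) j.1| ≤ ρ)
    {x : ℝ} (hx : x ∈ Icc (0:ℝ) 1) (f : Words Ωs → ℝ) (B : ℝ) (hB0 : 0 ≤ B)
    (hB : ∀ ω : Words Ωs, |f ω| ≤ B * |rdelta p k ι T ω.1 x|) :
    Summable f ∧ |∑' ω : Words Ωs, f ω| ≤ B * (1 - ρ)⁻¹ := by
  obtain ⟨hDs, hDb⟩ := words_abs Ωs p k ι T ρ hρ1 hT hstep x hx
  have habsf : Summable (fun ω : Words Ωs => |f ω|) :=
    Summable.of_nonneg_of_le (fun ω => abs_nonneg _) hB (hDs.mul_left B)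
  refine ⟨Summable.of_abs habsf, ?_⟩
  calc |∑' ω : Words Ωs, f ω| ≤ ∑' ω : Words Ωs, |f ω| := abs_tsum_le_real habsf
    _ ≤ ∑' ω : Words Ωs, B * |rdelta p k ι T ω.1 x| :=
        Summable.tsum_le_tsum hB habsf (hDs.mul_left B)
    _ = B * ∑' ω : Words Ωs, |rdelta p k ι T ω.1 x| := tsum_mul_left
    _ ≤ B * (1 - ρ)⁻¹ := mul_le_mul_of_nonneg_left hDb hB0

private lemma BC_nonneg (hp : ∀ j ∈ Ωs, 0 < p j) :
    0 ≤ 2 * ∑ i ∈ Finset.Icc 1 N, ∑' j : Ωs, p j.1 / |k i j.1| := by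
  apply mul_nonneg (by norm_num)
  exact Finset.sum_nonneg fun i _ =>
    tsum_nonneg fun j => div_nonneg (hp j.1 j.2).le (abs_nonneg _)

private lemma Gf_facts (hρ1 : ρ < 1) (hp : ∀ j ∈ Ωs, 0 < p j)
    (hι : ∀ x ∈ Icc (0:ℝ) 1, ι x ∈ Finset.Icc 1 N)
    (hA2 : ∀ n ∈ Finset.Icc 1 N,
      Summable (fun j : Ωs => p j.1 / |k n j.1|) ∧ ∑' j : Ωs, p j.1 / |k n j.1| ≤ ρ)
    (hT : ∀ j ∈ Ωs, ∀ x ∈ Icc (0:ℝ) 1, Tpl k d ι j x ∈ Icc (0:ℝ) 1) :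
    ∀ x ∈ Icc (0:ℝ) 1,
      Summable (fun ω : Words Ωs => rdelta p k ι (Tpl k d ι) ω.1 x *
          CC Ωs p k ι (rwordApply (Tpl k d ι) ω.1 x))
        ∧ |Gf Ωs p k d ι x|
            ≤ (2 * ∑ i ∈ Finset.Icc 1 N, ∑' j : Ωs, p j.1 / |k i j.1|) * (1 - ρ)⁻¹ := by
  intro x hx
  have hstep := hstep_lemma hp hι hA2
  have hB : ∀ ω : Words Ωs,
      |rdelta p k ι (Tpl k d ι) ω.1 x * CC Ωs p k ι (rwordApply (Tpl k d ι) ω.1 x)|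
      ≤ (2 * ∑ i ∈ Finset.Icc 1 N, ∑' j : Ωs, p j.1 / |k i j.1|)
          * |rdelta p k ι (Tpl k d ι) ω.1 x| := by
    intro ω
    rw [abs_mul, mul_comm]
    apply mul_le_mul_of_nonneg_right _ (abs_nonneg _)
    have hmem := rword_mem hT ω.1 ω.2 x hx
    obtain ⟨_, h0, h1⟩ := CC_facts hp hι hA2 _ hmem
    rw [abs_of_nonneg h0]
    exact h1
  exact dom_facts hρ1 hT hstep hx _ _ (BC_nonneg hp) hB

private lemma KB_facts (hρ1 : ρ < 1) (hp : ∀ j ∈ Ωs, 0 < p j)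
    (hι : ∀ x ∈ Icc (0:ℝ) 1, ι x ∈ Finset.Icc 1 N)
    (hA2 : ∀ n ∈ Finset.Icc 1 N,
      Summable (fun j : Ωs => p j.1 / |k n j.1|) ∧ ∑' j : Ωs, p j.1 / |k n j.1| ≤ ρ)
    (hT : ∀ j ∈ Ωs, ∀ x ∈ Icc (0:ℝ) 1, Tpl k d ι j x ∈ Icc (0:ℝ) 1) :
    ∀ (i : ℕ), ∀ x ∈ Icc (0:ℝ) 1,
      Summable (fun ω : Words Ωs => if i < ι (rwordApply (Tpl k d ι) ω.1 x)
          then rdelta p k ι (Tpl k d ι) ω.1 x else 0)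
        ∧ |KB Ωs p k ι (Tpl k d ι) i x| ≤ (1 - ρ)⁻¹ := by
  intro i x hx
  have hstep := hstep_lemma hp hι hA2
  have hB : ∀ ω : Words Ωs,
      |if i < ι (rwordApply (Tpl k d ι) ω.1 x) then rdelta p k ι (Tpl k d ι) ω.1 x else 0|
      ≤ 1 * |rdelta p k ι (Tpl k d ι) ω.1 x| := by
    intro ω
    rw [one_mul]
    split_ifs
    · exact le_refl _
    · simpa using abs_nonneg _
  have h := dom_facts hρ1 hT hstep hx _ 1 zero_le_one hB
  simpa [KB] using h
end AuxStmt10e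
section AuxStmt10f
set_option maxHeartbeats 1000000
open Set

variable {Ωs : Set ℕ} {N : ℕ} {p : ℕ → ℝ} {ρ : ℝ} {k d : ℕ → ℕ → ℝ} {ι : ℝ → ℕ}
  {z : ℕ → ℝ}

private lemma recE_lemma (hN : 2 ≤ N) (hρ0 : 0 < ρ) (hρ1 : ρ < 1)
    (hp : ∀ j ∈ Ωs, 0 < p j) (hpsum : HasSum (fun j : Ωs => p j.1) 1)
    (hι : ∀ x ∈ Icc (0:ℝ) 1, ι x ∈ Finset.Icc 1 N)
    (hk : ∀ n ∈ Finset.Icc 1 N, ∀ j ∈ Ωs, k n j ≠ 0)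
    (hT : ∀ j ∈ Ωs, ∀ x ∈ Icc (0:ℝ) 1, Tpl k d ι j x ∈ Icc (0:ℝ) 1)
    (hA2 : ∀ n ∈ Finset.Icc 1 N,
      Summable (fun j : Ωs => p j.1 / |k n j.1|) ∧ ∑' j : Ωs, p j.1 / |k n j.1| ≤ ρ)
    (hab : ∀ i ∈ Finset.Icc 1 (N - 1), ∀ j ∈ Ωs,
      aPt k d z i j ∈ Icc (0:ℝ) 1 ∧ bPt k d z i j ∈ Icc (0:ℝ) 1)
    (hA4 : ∀ j ∈ Ωs, (d 1 j = if 0 < k 1 j then 0 else 1) ∧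
      (d N j = if 0 < k N j then 1 - k N j else -k N j)) :
    ∀ x ∈ Icc (0:ℝ) 1,
      Ef Ωs N p k d ι z x
        = ∑' j : Ωs, (p j.1 / k (ι x) j.1) * Ef Ωs N p k d ι z (Tpl k d ι j.1 x) := by
  intro x hx
  have hstep := hstep_lemma (N := N) hp hι hA2
  obtain ⟨hsx, hbx⟩ := hstep x hx
  have hnmem := hι x hx
  obtain ⟨hn1, hnN⟩ := Finset.mem_Icc.1 hnmem
  have hone : (0:ℝ) < 1 - ρ := by linarith
  have hinv0 : (0:ℝ) ≤ (1 - ρ)⁻¹ := inv_nonneg.2 hone.le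
  have hTx : ∀ j : Ωs, Tpl k d ι j.1 x ∈ Icc (0:ℝ) 1 := fun j => hT j.1 j.2 x hx
  have hGbound := fun (x' : ℝ) (hx' : x' ∈ Icc (0:ℝ) 1) =>
    (Gf_facts hρ1 hp hι hA2 hT x' hx').2
  have hGsummand := fun (x' : ℝ) (hx' : x' ∈ Icc (0:ℝ) 1) =>
    (Gf_facts hρ1 hp hι hA2 hT x' hx').1
  have hKBsummand := fun (i : ℕ) (x' : ℝ) (hx' : x' ∈ Icc (0:ℝ) 1) =>
    (KB_facts hρ1 hp hι hA2 hT i x' hx').1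
  have hKBbound := fun (i : ℕ) (x' : ℝ) (hx' : x' ∈ Icc (0:ℝ) 1) =>
    (KB_facts hρ1 hp hι hA2 hT i x' hx').2
  -- (a) recursion for Gf
  have ha : Gf Ωs p k d ι x = CC Ωs p k ι x
      + ∑' j : Ωs, (p j.1 / k (ι x) j.1) * Gf Ωs p k d ι (Tpl k d ι j.1 x) := by
    have h := tsum_words_cons (hGsummand x hx)
    have hnil : rdelta p k ι (Tpl k d ι) (nilW Ωs).1 x *
        CC Ωs p k ι (rwordApply (Tpl k d ι) (nilW Ωs).1 x) = CC Ωs p k ι x := by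
      show rdelta p k ι (Tpl k d ι) [] x * CC Ωs p k ι (rwordApply (Tpl k d ι) [] x) = _
      simp [rdelta, rwordApply]
    have hcons : ∀ (j : Ωs) (ω : Words Ωs),
        rdelta p k ι (Tpl k d ι) (consW j ω).1 x *
          CC Ωs p k ι (rwordApply (Tpl k d ι) (consW j ω).1 x)
        = (p j.1 / k (ι x) j.1) * (rdelta p k ι (Tpl k d ι) ω.1 (Tpl k d ι j.1 x) *
            CC Ωs p k ι (rwordApply (Tpl k d ι) ω.1 (Tpl k d ι j.1 x))) := by
      intro j ω
      show rdelta p k ι (Tpl k d ι) (j.1 :: ω.1) x *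
          CC Ωs p k ι (rwordApply (Tpl k d ι) (j.1 :: ω.1) x) = _
      simp only [rdelta, rwordApply]
      ring
    calc Gf Ωs p k d ι x = _ := h
      _ = CC Ωs p k ι x
          + ∑' j : Ωs, (p j.1 / k (ι x) j.1) * Gf Ωs p k d ι (Tpl k d ι j.1 x) := by
        rw [hnil]
        congr 1
        apply tsum_congr
        intro j
        rw [tsum_congr (hcons j), tsum_mul_left]
        rfl
  -- (b) recursion for KB
  have hbKB : ∀ i : ℕ, KB Ωs p k ι (Tpl k d ι) i x
      = (if i < ι x then (1:ℝ) else 0)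
        + ∑' j : Ωs, (p j.1 / k (ι x) j.1) * KB Ωs p k ι (Tpl k d ι) i (Tpl k d ι j.1 x) := by
    intro i
    have h := tsum_words_cons (hKBsummand i x hx)
    have hnil : (if i < ι (rwordApply (Tpl k d ι) (nilW Ωs).1 x)
        then rdelta p k ι (Tpl k d ι) (nilW Ωs).1 x else 0)
        = (if i < ι x then (1:ℝ) else 0) := by
      show (if i < ι (rwordApply (Tpl k d ι) [] x)
        then rdelta p k ι (Tpl k d ι) [] x else 0) = _
      simp only [rdelta, rwordApply]
      exact if_congr Iff.rfl rfl rfl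
    have hcons : ∀ (j : Ωs) (ω : Words Ωs),
        (if i < ι (rwordApply (Tpl k d ι) (consW j ω).1 x)
          then rdelta p k ι (Tpl k d ι) (consW j ω).1 x else 0)
        = (p j.1 / k (ι x) j.1) *
            (if i < ι (rwordApply (Tpl k d ι) ω.1 (Tpl k d ι j.1 x))
              then rdelta p k ι (Tpl k d ι) ω.1 (Tpl k d ι j.1 x) else 0) := by
      intro j ω
      show (if i < ι (rwordApply (Tpl k d ι) ω.1 (Tpl k d ι j.1 x))
          then p j.1 / k (ι x) j.1 * rdelta p k ι (Tpl k d ι) ω.1 (Tpl k d ι j.1 x) else 0) = _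
      rw [mul_ite, mul_zero]
    calc KB Ωs p k ι (Tpl k d ι) i x = _ := h
      _ = (if i < ι x then (1:ℝ) else 0)
          + ∑' j : Ωs, (p j.1 / k (ι x) j.1) * KB Ωs p k ι (Tpl k d ι) i (Tpl k d ι j.1 x) := by
        rw [hnil]
        congr 1
        apply tsum_congr
        intro j
        rw [tsum_congr (hcons j), tsum_mul_left]
        rfl
  -- (c) the affine identity for x
  have hkne : ∀ j : Ωs, k (ι x) j.1 ≠ 0 := fun j => hk (ι x) hnmem j.1 j.2
  have hTval : ∀ j : Ωs, (p j.1 / k (ι x) j.1) * Tpl k d ι j.1 x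
      = p j.1 * x + p j.1 * d (ι x) j.1 / k (ι x) j.1 := by
    intro j
    have hTeq : Tpl k d ι j.1 x = k (ι x) j.1 * x + d (ι x) j.1 := rfl
    rw [hTeq]
    have h0 := hkne j
    field_simp
  have s3 : Summable (fun j : Ωs => (p j.1 / k (ι x) j.1) * Tpl k d ι j.1 x) := by
    apply Summable.of_abs
    apply Summable.of_nonneg_of_le (fun j => abs_nonneg _) _ hsx
    intro j
    rw [abs_mul]
    have h1 : |Tpl k d ι j.1 x| ≤ 1 := by
      have h2 := hTx j
      rw [abs_le]
      exact ⟨by linarith [h2.1], h2.2⟩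
    calc |p j.1 / k (ι x) j.1| * |Tpl k d ι j.1 x|
        ≤ |p j.1 / k (ι x) j.1| * 1 := mul_le_mul_of_nonneg_left h1 (abs_nonneg _)
      _ = |p j.1 / k (ι x) j.1| := mul_one _
  have spx : Summable (fun j : Ωs => p j.1 * x) := hpsum.summable.mul_right x
  have spd : Summable (fun j : Ωs => p j.1 * d (ι x) j.1 / k (ι x) j.1) := by
    have heq : (fun j : Ωs => p j.1 * d (ι x) j.1 / k (ι x) j.1)
        = fun j : Ωs => (p j.1 / k (ι x) j.1) * Tpl k d ι j.1 x - p j.1 * x := by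
      funext j
      rw [hTval j]
      ring
    rw [heq]
    exact s3.sub spx
  have hc : x = (∑' j : Ωs, (p j.1 / k (ι x) j.1) * Tpl k d ι j.1 x)
      - ∑' j : Ωs, p j.1 * d (ι x) j.1 / k (ι x) j.1 := by
    have h1 : ∑' j : Ωs, (p j.1 / k (ι x) j.1) * Tpl k d ι j.1 x
        = x + ∑' j : Ωs, p j.1 * d (ι x) j.1 / k (ι x) j.1 := by
      calc ∑' j : Ωs, (p j.1 / k (ι x) j.1) * Tpl k d ι j.1 x
          = ∑' j : Ωs, (p j.1 * x + p j.1 * d (ι x) j.1 / k (ι x) j.1) := tsum_congr hTval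
        _ = (∑' j : Ωs, p j.1 * x) + ∑' j : Ωs, p j.1 * d (ι x) j.1 / k (ι x) j.1 :=
            Summable.tsum_add spx spd
        _ = x + ∑' j : Ωs, p j.1 * d (ι x) j.1 / k (ι x) j.1 := by
            rw [tsum_mul_right, hpsum.tsum_eq, one_mul]
    linarith [h1]
  -- summability of eta/phi terms
  have hηt : ∀ i ∈ Finset.Icc 1 (N-1), Summable (fun j : Ωs =>
      p j.1 * ((if 0 < k i j.1 then (1:ℝ) else 0) - aPt k d z i j.1) / k i j.1) := by
    intro i hi
    obtain ⟨hi1, hi2⟩ := Finset.mem_Icc.1 hi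
    have hiN : i ∈ Finset.Icc 1 N := Finset.mem_Icc.2 ⟨hi1, by omega⟩
    apply Summable.of_abs
    apply Summable.of_nonneg_of_le (fun j => abs_nonneg _) _ (hA2 i hiN).1
    intro j
    have hkpos : 0 < |k i j.1| := abs_pos.2 (hk i hiN j.1 j.2)
    have hae := (hab i hi j.1 j.2).1
    have he1 : |(if 0 < k i j.1 then (1:ℝ) else 0) - aPt k d z i j.1| ≤ 1 := by
      rw [abs_le]
      split_ifs <;> constructor <;> linarith [hae.1, hae.2]
    rw [abs_div, abs_mul, abs_of_pos (hp j.1 j.2), div_le_div_iff₀ hkpos hkpos]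
    calc p j.1 * |(if 0 < k i j.1 then (1:ℝ) else 0) - aPt k d z i j.1| * |k i j.1|
        ≤ p j.1 * 1 * |k i j.1| := by
          apply mul_le_mul_of_nonneg_right _ (abs_nonneg _)
          exact mul_le_mul_of_nonneg_left he1 (hp j.1 j.2).le
      _ = p j.1 * |k i j.1| := by ring
  have hφt : ∀ i ∈ Finset.Icc 1 (N-1), Summable (fun j : Ωs =>
      p j.1 * (-(if k (i+1) j.1 < 0 then (1:ℝ) else 0) + bPt k d z i j.1) / k (i+1) j.1) := by
    intro i hi
    obtain ⟨hi1, hi2⟩ := Finset.mem_Icc.1 hi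
    have hiN : i + 1 ∈ Finset.Icc 1 N := Finset.mem_Icc.2 ⟨by omega, by omega⟩
    apply Summable.of_abs
    apply Summable.of_nonneg_of_le (fun j => abs_nonneg _) _ (hA2 (i+1) hiN).1
    intro j
    have hkpos : 0 < |k (i+1) j.1| := abs_pos.2 (hk (i+1) hiN j.1 j.2)
    have hbe := (hab i hi j.1 j.2).2
    have he1 : |-(if k (i+1) j.1 < 0 then (1:ℝ) else 0) + bPt k d z i j.1| ≤ 1 := by
      rw [abs_le]
      split_ifs <;> constructor <;> linarith [hbe.1, hbe.2]
    rw [abs_div, abs_mul, abs_of_pos (hp j.1 j.2), div_le_div_iff₀ hkpos hkpos]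
    calc p j.1 * |-(if k (i+1) j.1 < 0 then (1:ℝ) else 0) + bPt k d z i j.1| * |k (i+1) j.1|
        ≤ p j.1 * 1 * |k (i+1) j.1| := by
          apply mul_le_mul_of_nonneg_right _ (abs_nonneg _)
          exact mul_le_mul_of_nonneg_left he1 (hp j.1 j.2).le
      _ = p j.1 * |k (i+1) j.1| := by ring
  -- (d) the constant identity
  have hd : CC Ωs p k ι x
      - (∑ i ∈ Finset.Icc 1 (N-1),
          (etaC Ωs p k d z i + phiC Ωs p k d z i) * (if i < ι x then (1:ℝ) else 0))
      + (∑' j : Ωs, p j.1 * d (ι x) j.1 / k (ι x) j.1) = 0 := by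
    have hfilter : (∑ i ∈ Finset.Icc 1 (N-1),
        (etaC Ωs p k d z i + phiC Ωs p k d z i) * (if i < ι x then (1:ℝ) else 0))
        = ∑ i ∈ Finset.Ico 1 (ι x), (etaC Ωs p k d z i + phiC Ωs p k d z i) := by
      rw [Finset.sum_congr rfl (fun i _ => by rw [mul_ite, mul_one, mul_zero]),
        ← Finset.sum_filter]
      congr 1
      ext i
      simp only [Finset.mem_filter, Finset.mem_Icc, Finset.mem_Ico]
      omega
    have hIcoIcc : ∀ i ∈ Finset.Ico 1 (ι x), i ∈ Finset.Icc 1 (N-1) := by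
      intro i hi
      have h1 := Finset.mem_Ico.1 hi
      exact Finset.mem_Icc.2 ⟨h1.1, by omega⟩
    have hsumsum : Summable (fun j : Ωs => ∑ i ∈ Finset.Ico 1 (ι x),
        (p j.1 * ((if 0 < k i j.1 then (1:ℝ) else 0) - aPt k d z i j.1) / k i j.1
          + p j.1 * (-(if k (i+1) j.1 < 0 then (1:ℝ) else 0) + bPt k d z i j.1)
              / k (i+1) j.1)) :=
      summable_sum (fun i hi => ((hηt i (hIcoIcc i hi)).add (hφt i (hIcoIcc i hi))))
    have hstep2 : ∑ i ∈ Finset.Ico 1 (ι x), (etaC Ωs p k d z i + phiC Ωs p k d z i)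
        = ∑' j : Ωs, ∑ i ∈ Finset.Ico 1 (ι x),
            (p j.1 * ((if 0 < k i j.1 then (1:ℝ) else 0) - aPt k d z i j.1) / k i j.1
              + p j.1 * (-(if k (i+1) j.1 < 0 then (1:ℝ) else 0) + bPt k d z i j.1)
                  / k (i+1) j.1) := by
      rw [Summable.tsum_finsetSum (fun i hi => (hηt i (hIcoIcc i hi)).add (hφt i (hIcoIcc i hi)))]
      apply Finset.sum_congr rfl
      intro i hi
      exact (Summable.tsum_add (hηt i (hIcoIcc i hi)) (hφt i (hIcoIcc i hi))).symm
    have s_cct := (CC_facts hp hι hA2 x hx).1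
    rw [hfilter, hstep2]
    have hCCx : CC Ωs p k ι x = ∑' j : Ωs,
        ((∑ i ∈ Finset.Ico 1 (ι x), p j.1 / |k i j.1|)
          + (if k (ι x) j.1 < 0 then p j.1 / |k (ι x) j.1| else 0)) := rfl
    rw [hCCx, ← Summable.tsum_sub s_cct hsumsum, ← Summable.tsum_add (s_cct.sub hsumsum) spd]
    have hzero : ∀ j : Ωs,
        (((∑ i ∈ Finset.Ico 1 (ι x), p j.1 / |k i j.1|)
          + (if k (ι x) j.1 < 0 then p j.1 / |k (ι x) j.1| else 0))
        - (∑ i ∈ Finset.Ico 1 (ι x),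
            (p j.1 * ((if 0 < k i j.1 then (1:ℝ) else 0) - aPt k d z i j.1) / k i j.1
              + p j.1 * (-(if k (i+1) j.1 < 0 then (1:ℝ) else 0) + bPt k d z i j.1)
                  / k (i+1) j.1)))
        + p j.1 * d (ι x) j.1 / k (ι x) j.1 = 0 := by
      intro j
      have hK : ∀ i, 1 ≤ i → i ≤ N → k i j.1 ≠ 0 :=
        fun i h1 h2 => hk i (Finset.mem_Icc.2 ⟨h1, h2⟩) j.1 j.2
      have hkey := keyIdent (p j.1) (fun i => k i j.1) (fun i => d i j.1) z N hK
        (hA4 j.1 j.2).1 (ι x) hn1 hnN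
      simp only [aPt, bPt]
      beta_reduce at hkey
      linarith [hkey]
    rw [tsum_congr hzero, tsum_zero]
  -- summabilities for the combination
  have sKBj : ∀ i : ℕ, Summable (fun j : Ωs =>
      (p j.1 / k (ι x) j.1) * KB Ωs p k ι (Tpl k d ι) i (Tpl k d ι j.1 x)) := by
    intro i
    apply Summable.of_abs
    apply Summable.of_nonneg_of_le (fun j => abs_nonneg _) _ (hsx.mul_right ((1-ρ)⁻¹))
    intro j
    rw [abs_mul]
    exact mul_le_mul_of_nonneg_left (hKBbound i _ (hTx j)) (abs_nonneg _)
  have sG1 : Summable (fun j : Ωs =>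
      (p j.1 / k (ι x) j.1) * Gf Ωs p k d ι (Tpl k d ι j.1 x)) := by
    apply Summable.of_abs
    apply Summable.of_nonneg_of_le (fun j => abs_nonneg _) _
      (hsx.mul_right ((2 * ∑ i ∈ Finset.Icc 1 N, ∑' j : Ωs, p j.1 / |k i j.1|) * (1-ρ)⁻¹))
    intro j
    rw [abs_mul]
    exact mul_le_mul_of_nonneg_left (hGbound _ (hTx j)) (abs_nonneg _)
  have sS2 : Summable (fun j : Ωs => ∑ i ∈ Finset.Icc 1 (N-1),
      (etaC Ωs p k d z i + phiC Ωs p k d z i) *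
        ((p j.1 / k (ι x) j.1) * KB Ωs p k ι (Tpl k d ι) i (Tpl k d ι j.1 x))) :=
    summable_sum (fun i _ => (sKBj i).mul_left _)
  -- recursion for Sf
  have hSx : Sf Ωs N p k d ι z x
      = (∑ i ∈ Finset.Icc 1 (N-1),
          (etaC Ωs p k d z i + phiC Ωs p k d z i) * (if i < ι x then (1:ℝ) else 0))
        + ∑' j : Ωs, ∑ i ∈ Finset.Icc 1 (N-1),
            (etaC Ωs p k d z i + phiC Ωs p k d z i) *
              ((p j.1 / k (ι x) j.1) * KB Ωs p k ι (Tpl k d ι) i (Tpl k d ι j.1 x)) := by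
    calc Sf Ωs N p k d ι z x
        = ∑ i ∈ Finset.Icc 1 (N-1), (etaC Ωs p k d z i + phiC Ωs p k d z i) *
            ((if i < ι x then (1:ℝ) else 0)
              + ∑' j : Ωs, (p j.1 / k (ι x) j.1) * KB Ωs p k ι (Tpl k d ι) i (Tpl k d ι j.1 x)) :=
          Finset.sum_congr rfl (fun i _ => by rw [← hbKB i])
      _ = ∑ i ∈ Finset.Icc 1 (N-1),
            ((etaC Ωs p k d z i + phiC Ωs p k d z i) * (if i < ι x then (1:ℝ) else 0)
              + (etaC Ωs p k d z i + phiC Ωs p k d z i) *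
                  ∑' j : Ωs, (p j.1 / k (ι x) j.1) * KB Ωs p k ι (Tpl k d ι) i (Tpl k d ι j.1 x)) :=
          Finset.sum_congr rfl (fun i _ => by rw [mul_add])
      _ = (∑ i ∈ Finset.Icc 1 (N-1),
            (etaC Ωs p k d z i + phiC Ωs p k d z i) * (if i < ι x then (1:ℝ) else 0))
          + ∑ i ∈ Finset.Icc 1 (N-1), (etaC Ωs p k d z i + phiC Ωs p k d z i) *
              ∑' j : Ωs, (p j.1 / k (ι x) j.1) * KB Ωs p k ι (Tpl k d ι) i (Tpl k d ι j.1 x) :=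
          Finset.sum_add_distrib
      _ = (∑ i ∈ Finset.Icc 1 (N-1),
            (etaC Ωs p k d z i + phiC Ωs p k d z i) * (if i < ι x then (1:ℝ) else 0))
          + ∑ i ∈ Finset.Icc 1 (N-1), ∑' j : Ωs,
              (etaC Ωs p k d z i + phiC Ωs p k d z i) *
                ((p j.1 / k (ι x) j.1) * KB Ωs p k ι (Tpl k d ι) i (Tpl k d ι j.1 x)) := by
          congr 1
          exact Finset.sum_congr rfl (fun i _ => tsum_mul_left.symm)
      _ = _ := by
          rw [Summable.tsum_finsetSum (fun i _ => (sKBj i).mul_left _)]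
  -- per-j identity
  have hperj : ∀ j : Ωs, (p j.1 / k (ι x) j.1) * Ef Ωs N p k d ι z (Tpl k d ι j.1 x)
      = (p j.1 / k (ι x) j.1) * Gf Ωs p k d ι (Tpl k d ι j.1 x)
        - (∑ i ∈ Finset.Icc 1 (N-1),
            (etaC Ωs p k d z i + phiC Ωs p k d z i) *
              ((p j.1 / k (ι x) j.1) * KB Ωs p k ι (Tpl k d ι) i (Tpl k d ι j.1 x)))
        - (p j.1 / k (ι x) j.1) * Tpl k d ι j.1 x := by
    intro j
    have hEdef : Ef Ωs N p k d ι z (Tpl k d ι j.1 x)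
        = Gf Ωs p k d ι (Tpl k d ι j.1 x) - Sf Ωs N p k d ι z (Tpl k d ι j.1 x)
          - Tpl k d ι j.1 x := rfl
    have hSdef : Sf Ωs N p k d ι z (Tpl k d ι j.1 x)
        = ∑ i ∈ Finset.Icc 1 (N-1), (etaC Ωs p k d z i + phiC Ωs p k d z i) *
            KB Ωs p k ι (Tpl k d ι) i (Tpl k d ι j.1 x) := rfl
    rw [hEdef, hSdef, mul_sub, mul_sub, Finset.mul_sum]
    congr 1
    congr 1
    exact Finset.sum_congr rfl (fun i _ => by ring)
  have hRHS : ∑' j : Ωs, (p j.1 / k (ι x) j.1) * Ef Ωs N p k d ι z (Tpl k d ι j.1 x)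
      = (∑' j : Ωs, (p j.1 / k (ι x) j.1) * Gf Ωs p k d ι (Tpl k d ι j.1 x))
        - (∑' j : Ωs, ∑ i ∈ Finset.Icc 1 (N-1),
            (etaC Ωs p k d z i + phiC Ωs p k d z i) *
              ((p j.1 / k (ι x) j.1) * KB Ωs p k ι (Tpl k d ι) i (Tpl k d ι j.1 x)))
        - ∑' j : Ωs, (p j.1 / k (ι x) j.1) * Tpl k d ι j.1 x := by
    rw [tsum_congr hperj, Summable.tsum_sub (sG1.sub sS2) s3, Summable.tsum_sub sG1 sS2]
  have hEx : Ef Ωs N p k d ι z x = Gf Ωs p k d ι x - Sf Ωs N p k d ι z x - x := rfl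
  rw [hRHS]
  linarith [ha, hSx, hc, hd, hEx]

end AuxStmt10f
section AuxStmt10g
set_option maxHeartbeats 1000000
open Set Filter

variable {Ωs : Set ℕ} {N : ℕ} {p : ℕ → ℝ} {ρ : ℝ} {k d : ℕ → ℕ → ℝ} {ι : ℝ → ℕ}
  {z : ℕ → ℝ}

private lemma Ef_bound (hρ1 : ρ < 1) (hp : ∀ j ∈ Ωs, 0 < p j)
    (hι : ∀ x ∈ Icc (0:ℝ) 1, ι x ∈ Finset.Icc 1 N)
    (hA2 : ∀ n ∈ Finset.Icc 1 N,
      Summable (fun j : Ωs => p j.1 / |k n j.1|) ∧ ∑' j : Ωs, p j.1 / |k n j.1| ≤ ρ)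
    (hT : ∀ j ∈ Ωs, ∀ x ∈ Icc (0:ℝ) 1, Tpl k d ι j x ∈ Icc (0:ℝ) 1) :
    ∀ x ∈ Icc (0:ℝ) 1,
      |Ef Ωs N p k d ι z x|
        ≤ (2 * ∑ i ∈ Finset.Icc 1 N, ∑' j : Ωs, p j.1 / |k i j.1|) * (1 - ρ)⁻¹
          + (∑ i ∈ Finset.Icc 1 (N-1), |etaC Ωs p k d z i + phiC Ωs p k d z i|) * (1 - ρ)⁻¹
          + 1 := by
  intro x hx
  have hG := (Gf_facts hρ1 hp hι hA2 hT x hx).2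
  have hS : |Sf Ωs N p k d ι z x|
      ≤ (∑ i ∈ Finset.Icc 1 (N-1), |etaC Ωs p k d z i + phiC Ωs p k d z i|) * (1 - ρ)⁻¹ := by
    calc |Sf Ωs N p k d ι z x|
        ≤ ∑ i ∈ Finset.Icc 1 (N-1),
            |(etaC Ωs p k d z i + phiC Ωs p k d z i) * KB Ωs p k ι (Tpl k d ι) i x| :=
          Finset.abs_sum_le_sum_abs _ _
      _ ≤ ∑ i ∈ Finset.Icc 1 (N-1),
            |etaC Ωs p k d z i + phiC Ωs p k d z i| * (1 - ρ)⁻¹ := by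
          apply Finset.sum_le_sum
          intro i _
          rw [abs_mul]
          exact mul_le_mul_of_nonneg_left ((KB_facts hρ1 hp hι hA2 hT i x hx).2) (abs_nonneg _)
      _ = (∑ i ∈ Finset.Icc 1 (N-1), |etaC Ωs p k d z i + phiC Ωs p k d z i|) * (1 - ρ)⁻¹ :=
          by rw [Finset.sum_mul]
  have hx1 : |x| ≤ 1 := by
    rw [abs_le]
    exact ⟨by linarith [hx.1], hx.2⟩
  have t1 : |Ef Ωs N p k d ι z x|
      ≤ |Gf Ωs p k d ι x| + |Sf Ωs N p k d ι z x| + |x| := by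
    have e1 : Ef Ωs N p k d ι z x = Gf Ωs p k d ι x + (- Sf Ωs N p k d ι z x) + (-x) := by
      show Gf Ωs p k d ι x - Sf Ωs N p k d ι z x - x = _
      ring
    rw [e1]
    calc |Gf Ωs p k d ι x + (- Sf Ωs N p k d ι z x) + (-x)|
        ≤ |Gf Ωs p k d ι x + (- Sf Ωs N p k d ι z x)| + |(-x)| := abs_add_le _ _
      _ ≤ |Gf Ωs p k d ι x| + |(- Sf Ωs N p k d ι z x)| + |(-x)| := by
          have := abs_add_le (Gf Ωs p k d ι x) (- Sf Ωs N p k d ι z x)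
          linarith
      _ = |Gf Ωs p k d ι x| + |Sf Ωs N p k d ι z x| + |x| := by rw [abs_neg, abs_neg]
  linarith [hG, hS, hx1, t1]

end AuxStmt10g

set_option maxHeartbeats 1000000

/-- for every `y ∈ [0,1]`,
`y = Σ_{t≥0} Σ_{ω∈Ωᵗ} δ_ω(y,t)·C(T_ω(y)) − Σ_{i=1}^{N−1} (η_i + φ_i)·KB_i(y)`. -/
theorem stmt_10 (Ωs : Set ℕ) (N : ℕ) (hN : 2 ≤ N) (p : ℕ → ℝ) (ρ : ℝ)
    (hρ0 : 0 < ρ) (hρ1 : ρ < 1)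
    (hp : ∀ j ∈ Ωs, 0 < p j) (hpsum : HasSum (fun j : Ωs => p j.1) 1)
    (k d : ℕ → ℕ → ℝ) (ι : ℝ → ℕ) (z : ℕ → ℝ)
    (hι : ∀ x ∈ Icc (0:ℝ) 1, ι x ∈ Finset.Icc 1 N)
    (hk : ∀ n ∈ Finset.Icc 1 N, ∀ j ∈ Ωs, k n j ≠ 0)
    (hT : ∀ j ∈ Ωs, ∀ x ∈ Icc (0:ℝ) 1, Tpl k d ι j x ∈ Icc (0:ℝ) 1)
    (hA2 : ∀ n ∈ Finset.Icc 1 N,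
      Summable (fun j : Ωs => p j.1 / |k n j.1|) ∧
        ∑' j : Ωs, p j.1 / |k n j.1| ≤ ρ)
    (hS : ∀ n ∈ Finset.Icc 1 N, Sav Ωs p k n ≠ 0)
    (hz : ∀ i ∈ Finset.Icc 1 (N - 1), z i ∈ Icc (0:ℝ) 1)
    (hab : ∀ i ∈ Finset.Icc 1 (N - 1), ∀ j ∈ Ωs,
      aPt k d z i j ∈ Icc (0:ℝ) 1 ∧ bPt k d z i j ∈ Icc (0:ℝ) 1)
    -- (A4): the branches on `I_1` fix `{0,1}` and likewise on `I_N`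
    (hA4 : ∀ j ∈ Ωs,
      (d 1 j = if 0 < k 1 j then 0 else 1) ∧
        (d N j = if 0 < k N j then 1 - k N j else -k N j)) :
    ∀ y ∈ Icc (0:ℝ) 1,
      y = (∑' ω : Words Ωs,
            rdelta p k ι (Tpl k d ι) ω.1 y *
              CC Ωs p k ι (rwordApply (Tpl k d ι) ω.1 y)) -
          ∑ i ∈ Finset.Icc 1 (N - 1),
            (etaC Ωs p k d z i + phiC Ωs p k d z i) * KB Ωs p k ι (Tpl k d ι) i y := by
  intro y hy
  have hstep := hstep_lemma (N := N) hp hι hA2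
  have hrec := recE_lemma hN hρ0 hρ1 hp hpsum hι hk hT hA2 hab hA4
  have hbound := Ef_bound (z := z) (N := N) hρ1 hp hι hA2 hT
  have hone : (0:ℝ) < 1 - ρ := by linarith
  have hinv0 : (0:ℝ) ≤ (1 - ρ)⁻¹ := inv_nonneg.2 hone.le
  have hM0 : (0:ℝ) ≤ (2 * ∑ i ∈ Finset.Icc 1 N, ∑' j : Ωs, p j.1 / |k i j.1|) * (1 - ρ)⁻¹
      + (∑ i ∈ Finset.Icc 1 (N-1), |etaC Ωs p k d z i + phiC Ωs p k d z i|) * (1 - ρ)⁻¹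
      + 1 := by
    have h1 := BC_nonneg (N := N) (k := k) hp
    have h2 : (0:ℝ) ≤ ∑ i ∈ Finset.Icc 1 (N-1), |etaC Ωs p k d z i + phiC Ωs p k d z i| :=
      Finset.sum_nonneg fun i _ => abs_nonneg _
    have := mul_nonneg h1 hinv0
    have := mul_nonneg h2 hinv0
    linarith
  have hiter : ∀ t : ℕ, ∀ x ∈ Icc (0:ℝ) 1,
      |Ef Ωs N p k d ι z x|
        ≤ ((2 * ∑ i ∈ Finset.Icc 1 N, ∑' j : Ωs, p j.1 / |k i j.1|) * (1 - ρ)⁻¹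
            + (∑ i ∈ Finset.Icc 1 (N-1), |etaC Ωs p k d z i + phiC Ωs p k d z i|) * (1 - ρ)⁻¹
            + 1) * ρ ^ t := by
    intro t
    induction t with
    | zero =>
        intro x hx
        simpa using hbound x hx
    | succ t ih =>
        intro x hx
        obtain ⟨hsx, hbx⟩ := hstep x hx
        rw [hrec x hx]
        have hble : ∀ j : Ωs,
            |(p j.1 / k (ι x) j.1) * Ef Ωs N p k d ι z (Tpl k d ι j.1 x)|
            ≤ |p j.1 / k (ι x) j.1| *
              (((2 * ∑ i ∈ Finset.Icc 1 N, ∑' j : Ωs, p j.1 / |k i j.1|) * (1 - ρ)⁻¹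
                + (∑ i ∈ Finset.Icc 1 (N-1), |etaC Ωs p k d z i + phiC Ωs p k d z i|) * (1 - ρ)⁻¹
                + 1) * ρ ^ t) := by
          intro j
          rw [abs_mul]
          exact mul_le_mul_of_nonneg_left (ih _ (hT j.1 j.2 x hx)) (abs_nonneg _)
        have habs : Summable (fun j : Ωs =>
            |(p j.1 / k (ι x) j.1) * Ef Ωs N p k d ι z (Tpl k d ι j.1 x)|) :=
          Summable.of_nonneg_of_le (fun j => abs_nonneg _) hble (hsx.mul_right _)
        calc |∑' j : Ωs, (p j.1 / k (ι x) j.1) * Ef Ωs N p k d ι z (Tpl k d ι j.1 x)|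
            ≤ ∑' j : Ωs, |(p j.1 / k (ι x) j.1) * Ef Ωs N p k d ι z (Tpl k d ι j.1 x)| :=
              abs_tsum_le_real habs
          _ ≤ ∑' j : Ωs, |p j.1 / k (ι x) j.1| *
                (((2 * ∑ i ∈ Finset.Icc 1 N, ∑' j : Ωs, p j.1 / |k i j.1|) * (1 - ρ)⁻¹
                  + (∑ i ∈ Finset.Icc 1 (N-1), |etaC Ωs p k d z i + phiC Ωs p k d z i|) * (1 - ρ)⁻¹
                  + 1) * ρ ^ t) :=
              Summable.tsum_le_tsum hble habs (hsx.mul_right _)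
          _ = (∑' j : Ωs, |p j.1 / k (ι x) j.1|) *
                (((2 * ∑ i ∈ Finset.Icc 1 N, ∑' j : Ωs, p j.1 / |k i j.1|) * (1 - ρ)⁻¹
                  + (∑ i ∈ Finset.Icc 1 (N-1), |etaC Ωs p k d z i + phiC Ωs p k d z i|) * (1 - ρ)⁻¹
                  + 1) * ρ ^ t) := tsum_mul_right
          _ ≤ ρ * (((2 * ∑ i ∈ Finset.Icc 1 N, ∑' j : Ωs, p j.1 / |k i j.1|) * (1 - ρ)⁻¹
                  + (∑ i ∈ Finset.Icc 1 (N-1), |etaC Ωs p k d z i + phiC Ωs p k d z i|) * (1 - ρ)⁻¹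
                  + 1) * ρ ^ t) :=
              mul_le_mul_of_nonneg_right hbx (mul_nonneg hM0 (pow_nonneg hρ0.le t))
          _ = ((2 * ∑ i ∈ Finset.Icc 1 N, ∑' j : Ωs, p j.1 / |k i j.1|) * (1 - ρ)⁻¹
                + (∑ i ∈ Finset.Icc 1 (N-1), |etaC Ωs p k d z i + phiC Ωs p k d z i|) * (1 - ρ)⁻¹
                + 1) * ρ ^ (t + 1) := by ring
  have hEy : Ef Ωs N p k d ι z y = 0 := by
    have h1 : ∀ t : ℕ, |Ef Ωs N p k d ι z y|
        ≤ ((2 * ∑ i ∈ Finset.Icc 1 N, ∑' j : Ωs, p j.1 / |k i j.1|) * (1 - ρ)⁻¹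
            + (∑ i ∈ Finset.Icc 1 (N-1), |etaC Ωs p k d z i + phiC Ωs p k d z i|) * (1 - ρ)⁻¹
            + 1) * ρ ^ t := fun t => hiter t y hy
    have h2 : Filter.Tendsto (fun t : ℕ =>
        ((2 * ∑ i ∈ Finset.Icc 1 N, ∑' j : Ωs, p j.1 / |k i j.1|) * (1 - ρ)⁻¹
            + (∑ i ∈ Finset.Icc 1 (N-1), |etaC Ωs p k d z i + phiC Ωs p k d z i|) * (1 - ρ)⁻¹
            + 1) * ρ ^ t) Filter.atTop (nhds 0) := by
      have h3 := tendsto_pow_atTop_nhds_zero_of_lt_one hρ0.le hρ1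
      have h4 := h3.const_mul ((2 * ∑ i ∈ Finset.Icc 1 N, ∑' j : Ωs, p j.1 / |k i j.1|) * (1 - ρ)⁻¹
            + (∑ i ∈ Finset.Icc 1 (N-1), |etaC Ωs p k d z i + phiC Ωs p k d z i|) * (1 - ρ)⁻¹
            + 1)
      simpa using h4
    have h3 : |Ef Ωs N p k d ι z y| ≤ 0 := ge_of_tendsto' h2 h1
    exact abs_eq_zero.1 (le_antisymm h3 (abs_nonneg _))
  show y = Gf Ωs p k d ι y - ∑ i ∈ Finset.Icc 1 (N - 1),
      (etaC Ωs p k d z i + phiC Ωs p k d z i) * KB Ωs p k ι (Tpl k d ι) i y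
  have hE : Ef Ωs N p k d ι z y
      = Gf Ωs p k d ι y - Sf Ωs N p k d ι z y - y := rfl
  have hSdef : Sf Ωs N p k d ι z y = ∑ i ∈ Finset.Icc 1 (N - 1),
      (etaC Ωs p k d z i + phiC Ωs p k d z i) * KB Ωs p k ι (Tpl k d ι) i y := rfl
  rw [← hSdef]
  linarith [hEy, hE]

end
end
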